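/- arXiv:0712.0815 — 11 statements merged into one kernel-verified Lean document; each statement's English description precedes it below -/
import Mathlib

section
/- The free associative algebra k⟨x, y⟩ on two generators over a field k is left primitive: the vector space M with basis {e₀, e₁, e₂, …} on which x acts by x·eᵢ = e_{i−1} (with e_{−1} = 0) and y acts by y·eᵢ = e_{i²+1} is a faithful simple left k⟨x,y⟩-module. -/
namespace FreeTwoPrim

def step (s : Fin 2) (n : ℕ) : ℕ := if s = 0 then n - 1 else n ^ 2 + 1

@[simp] lemma step0 (n : ℕ) : step 0 n = n - 1 := by simp [step]
@[simp] lemma step1 (n : ℕ) : step 1 n = n ^ 2 + 1 := by simp [step]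

def h : ℕ → List (Fin 2) → ℕ
  | n, [] => n
  | n, s :: t => h (step s n) t

lemma h_nil (n : ℕ) : h n [] = n := rfl
lemma h_cons (n : ℕ) (s : Fin 2) (t : List (Fin 2)) : h n (s :: t) = h (step s n) t := rfl

lemma h_append_single (n : ℕ) (l : List (Fin 2)) (s : Fin 2) :
    h n (l ++ [s]) = step s (h n l) := by
  induction l generalizing n with
  | nil => rfl
  | cons a t ih => simp only [List.cons_append, h_cons, ih]

lemma le_h_add (n : ℕ) (l : List (Fin 2)) : n ≤ h n l + l.length := by
  induction l generalizing n with
  | nil => simp [h_nil]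
  | cons s t ih =>
    rw [h_cons]
    have H := ih (step s n)
    have hn2 : n ≤ n ^ 2 := Nat.le_self_pow (by norm_num) n
    rcases (by omega : s = 0 ∨ s = 1) with rfl | rfl <;>
      simp only [step0, step1] at H ⊢ <;> simp only [List.length_cons] <;> omega

/-- blocks of a word: the list of x-run lengths between y's, in processing order -/
def blocks : List (Fin 2) → List ℕ
  | [] => [0]
  | s :: t =>
    if s = 0 then
      match blocks t with
      | [] => [0]
      | a :: r => (a + 1) :: r
    else 0 :: blocks t

lemma blocks_ne_nil (l : List (Fin 2)) : blocks l ≠ [] := by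
  induction l with
  | nil => simp [blocks]
  | cons s t ih =>
    rcases hbt : blocks t with _ | ⟨a, r⟩
    · exact absurd hbt ih
    · by_cases hs : s = 0 <;> simp [blocks, hs, hbt]

lemma blocks_nil : blocks [] = [0] := rfl

lemma blocks_zero_cons (t : List (Fin 2)) (a : ℕ) (r : List ℕ) (hbt : blocks t = a :: r) :
    blocks (0 :: t) = (a + 1) :: r := by
  simp [blocks, hbt]

lemma blocks_one_cons (t : List (Fin 2)) : blocks (1 :: t) = 0 :: blocks t := by
  simp [blocks]

lemma blocks_injective : ∀ u v : List (Fin 2), blocks u = blocks v → u = v := by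
  intro u
  induction u with
  | nil =>
    intro v hv
    rcases v with _ | ⟨s, t⟩
    · rfl
    · exfalso
      rcases hbt : blocks t with _ | ⟨a, r⟩
      · exact absurd hbt (blocks_ne_nil t)
      rcases (by omega : s = 0 ∨ s = 1) with rfl | rfl
      · rw [blocks_nil, blocks_zero_cons t a r hbt] at hv
        simp at hv
      · rw [blocks_nil, blocks_one_cons] at hv
        have := congrArg List.tail hv
        simp at this
        exact (blocks_ne_nil t) this
  | cons s t ih =>
    intro v hv
    rcases hbt : blocks t with _ | ⟨a, r⟩
    · exact absurd hbt (blocks_ne_nil t)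
    rcases v with _ | ⟨s', t'⟩
    · exfalso
      rcases (by omega : s = 0 ∨ s = 1) with rfl | rfl
      · rw [blocks_nil, blocks_zero_cons t a r hbt] at hv
        simp at hv
      · rw [blocks_nil, blocks_one_cons] at hv
        have := congrArg List.tail hv
        simp at this
        exact (blocks_ne_nil t) this
    · rcases hbt' : blocks t' with _ | ⟨a', r'⟩
      · exact absurd hbt' (blocks_ne_nil t')
      rcases (by omega : s = 0 ∨ s = 1) with rfl | rfl <;>
        rcases (by omega : s' = 0 ∨ s' = 1) with rfl | rfl
      · rw [blocks_zero_cons t a r hbt, blocks_zero_cons t' a' r' hbt'] at hv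
        simp only [List.cons.injEq] at hv
        have : t = t' := ih t' (by rw [hbt, hbt']; simp [hv.1, hv.2]; omega)
        rw [this]
      · rw [blocks_zero_cons t a r hbt, blocks_one_cons t'] at hv
        simp only [List.cons.injEq] at hv
        omega
      · rw [blocks_one_cons t, blocks_zero_cons t' a' r' hbt'] at hv
        simp only [List.cons.injEq] at hv
        omega
      · rw [blocks_one_cons t, blocks_one_cons t'] at hv
        simp only [List.cons.injEq] at hv
        rw [ih t' hv.2]

lemma blocks_entry_le (l : List (Fin 2)) : ∀ a ∈ blocks l, a ≤ l.length := by
  induction l with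
  | nil => simp [blocks]
  | cons s t ih =>
    rcases hbt : blocks t with _ | ⟨a, r⟩
    · exact absurd hbt (blocks_ne_nil t)
    rcases (by omega : s = 0 ∨ s = 1) with rfl | rfl
    · rw [blocks_zero_cons t a r hbt]
      intro b hb
      rcases List.mem_cons.mp hb with rfl | hb
      · have := ih a (by rw [hbt]; exact List.mem_cons_self)
        simp [List.length_cons]; omega
      · have := ih b (by rw [hbt]; exact List.mem_cons_of_mem _ hb)
        simp [List.length_cons]; omega
    · rw [blocks_one_cons t]
      intro b hb
      rcases List.mem_cons.mp hb with rfl | hb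
      · omega
      · have := ih b (by rw [hbt]; rw [hbt] at hb; exact hb)
        simp [List.length_cons]; omega

end FreeTwoPrim

namespace FreeTwoPrim

def H : ℕ → List ℕ → ℕ
  | n, [] => n
  | n, [a] => n - a
  | n, a :: b :: r => H ((n - a) ^ 2 + 1) (b :: r)

lemma H_single (n a : ℕ) : H n [a] = n - a := rfl
lemma H_cons_cons (n a b : ℕ) (r : List ℕ) :
    H n (a :: b :: r) = H ((n - a) ^ 2 + 1) (b :: r) := rfl

lemma h_eq_H (n : ℕ) (u : List (Fin 2)) : h n u = H n (blocks u) := by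
  induction u generalizing n with
  | nil => simp [h_nil, blocks_nil, H_single]
  | cons s t ih =>
    rcases hbt : blocks t with _ | ⟨a, r⟩
    · exact absurd hbt (blocks_ne_nil t)
    rcases (by omega : s = 0 ∨ s = 1) with rfl | rfl
    · rw [blocks_zero_cons t a r hbt, h_cons, step0, ih, hbt]
      rcases r with _ | ⟨b, r'⟩
      · rw [H_single, H_single]; omega
      · rw [H_cons_cons, H_cons_cons]
        have e : n - 1 - a = n - (a + 1) := by omega
        rw [e]
    · rw [blocks_one_cons t, h_cons, step1, ih]
      rw [hbt, H_cons_cons, Nat.sub_zero]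

/-- separation: equal-length block lists at well-separated large starting points stay separated -/
lemma H_sep (B : ℕ) : ∀ (L L' : List ℕ) (m m' : ℕ), L.length = L'.length → L ≠ [] →
    (∀ a ∈ L, a ≤ B) → (∀ a ∈ L', a ≤ B) → 2 * B + 4 ≤ m' → m' + B + 1 ≤ m →
    H m' L' < H m L := by
  intro L
  induction L with
  | nil => intro L' m m' _ hne; exact absurd rfl hne
  | cons a rest ih =>
    intro L' m m' hlen _ hL hL' hm' hm
    rcases L' with _ | ⟨a', rest'⟩
    · simp at hlen
    have ha : a ≤ B := hL a (List.mem_cons_self)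
    have ha' : a' ≤ B := hL' a' (List.mem_cons_self)
    rcases rest with _ | ⟨b, rrest⟩
    · have : rest' = [] := by simpa using hlen
      subst this
      rw [H_single, H_single]
      omega
    · rcases rest' with _ | ⟨b', rrest'⟩
      · simp at hlen
      rw [H_cons_cons, H_cons_cons]
      apply ih (b' :: rrest') _ _ (by simpa using hlen) (by simp)
        (fun x hx => hL x (List.mem_cons_of_mem _ hx))
        (fun x hx => hL' x (List.mem_cons_of_mem _ hx))
      · -- 2B+4 ≤ (m'-a')^2+1
        have h1 : B + 4 ≤ m' - a' := by omega
        nlinarith [Nat.sub_le m' a']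
      · -- (m'-a')^2 + 1 + B + 1 ≤ (m-a)^2 + 1
        have h1 : m' - a' + 1 ≤ m - a := by omega
        have h2 : B + 4 ≤ m' - a' := by omega
        nlinarith

/-- lower bound: tower growth -/
lemma H_low (B : ℕ) : ∀ (L : List ℕ) (m : ℕ), L ≠ [] → (∀ a ∈ L, a ≤ B) →
    2 * B + 1 ≤ m → (m - 2 * B) ^ 2 ^ (L.length - 1) ≤ H m L := by
  intro L
  induction L with
  | nil => intro m hne; exact absurd rfl hne
  | cons a rest ih =>
    intro m _ hL hm
    have ha : a ≤ B := hL a (List.mem_cons_self)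
    rcases rest with _ | ⟨b, rrest⟩
    · simp only [List.length_cons, List.length_nil, Nat.zero_add, Nat.sub_self, pow_zero,
        pow_one, H_single]
      omega
    · rw [H_cons_cons]
      have key : (m - 2 * B) ^ 2 + 2 * B ≤ (m - a) ^ 2 := by
        have e1 : m - a = (m - 2 * B) + (2 * B - a) := by omega
        have hd : B ≤ 2 * B - a := by omega
        have hc : 1 ≤ m - 2 * B := by omega
        rw [e1]
        nlinarith
      calc (m - 2 * B) ^ 2 ^ ((a :: b :: rrest).length - 1)
          = ((m - 2 * B) ^ 2) ^ 2 ^ ((b :: rrest).length - 1) := by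
            rw [← pow_mul]
            congr 1
            simp only [List.length_cons]
            rw [(by omega : rrest.length + 1 + 1 - 1 = (rrest.length + 1 - 1) + 1), pow_succ]
            ring
        _ ≤ ((m - a) ^ 2 + 1 - 2 * B) ^ 2 ^ ((b :: rrest).length - 1) :=
            Nat.pow_le_pow_left (by omega) _
        _ ≤ H ((m - a) ^ 2 + 1) (b :: rrest) := by
            apply ih _ (by simp) (fun x hx => hL x (List.mem_cons_of_mem _ hx))
            have h5 : m - a ≤ (m - a) ^ 2 := Nat.le_self_pow two_ne_zero _
            omega

/-- upper bound: tower growth -/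
lemma H_up : ∀ (L : List ℕ) (m : ℕ), 1 ≤ m → H m L ≤ (m + 1) ^ 2 ^ (L.length - 1) := by
  intro L
  induction L with
  | nil =>
    intro m hm
    have e : H m [] = m := rfl
    simp only [e, List.length_nil, Nat.zero_sub, pow_zero, pow_one]
    omega
  | cons a rest ih =>
    intro m hm
    rcases rest with _ | ⟨b, rrest⟩
    · simp only [H_single, List.length_cons, List.length_nil, Nat.zero_add, Nat.sub_self,
        pow_zero, pow_one]
      omega
    · rw [H_cons_cons]
      calc H ((m - a) ^ 2 + 1) (b :: rrest)
          ≤ ((m - a) ^ 2 + 1 + 1) ^ 2 ^ ((b :: rrest).length - 1) := ih _ (by omega)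
        _ ≤ ((m + 1) ^ 2) ^ 2 ^ ((b :: rrest).length - 1) := by
            apply Nat.pow_le_pow_left
            have : m - a ≤ m := Nat.sub_le m a
            nlinarith
        _ = (m + 1) ^ 2 ^ ((a :: b :: rrest).length - 1) := by
            rw [← pow_mul]
            congr 1
            simp only [List.length_cons]
            rw [(by omega : rrest.length + 1 + 1 - 1 = (rrest.length + 1 - 1) + 1), pow_succ]
            ring

end FreeTwoPrim

namespace FreeTwoPrim

/-- different block-lengths give different (in fact ordered) values -/
lemma H_cross (B : ℕ) (L L' : List ℕ) (n : ℕ) (hL : ∀ a ∈ L, a ≤ B) (hlen : L'.length < L.length)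
    (hL'ne : L' ≠ []) (hn : 4 * B + 5 ≤ n) : H n L' < H n L := by
  have hLne : L ≠ [] := by
    intro h; rw [h] at hlen; simp at hlen
  have h1 : H n L' ≤ (n + 1) ^ 2 ^ (L'.length - 1) := H_up L' n (by omega)
  have h2 : (n - 2 * B) ^ 2 ^ (L.length - 1) ≤ H n L := H_low B L n hLne hL (by omega)
  have hc : 2 * B + 5 ≤ n - 2 * B := by omega
  have hsq : n + 2 ≤ (n - 2 * B) ^ 2 := by
    have e1 : n = (n - 2 * B) + 2 * B := by omega
    nlinarith
  have hexp : 2 ^ L'.length ≤ 2 ^ (L.length - 1) :=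
    Nat.pow_le_pow_right (by norm_num) (by omega)
  calc H n L' ≤ (n + 1) ^ 2 ^ (L'.length - 1) := h1
    _ < (n + 2) ^ 2 ^ (L'.length - 1) := by
        apply Nat.pow_lt_pow_left (by omega)
        positivity
    _ ≤ ((n - 2 * B) ^ 2) ^ 2 ^ (L'.length - 1) := Nat.pow_le_pow_left hsq _
    _ = (n - 2 * B) ^ (2 * 2 ^ (L'.length - 1)) := (pow_mul _ 2 _).symm
    _ ≤ (n - 2 * B) ^ 2 ^ (L.length - 1) := by
        apply Nat.pow_le_pow_right (by omega)
        calc 2 * 2 ^ (L'.length - 1) ≤ 2 ^ L'.length := by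
              rcases L' with _ | ⟨x, xs⟩
              · simp at hL'ne
              · simp only [List.length_cons, Nat.add_sub_cancel]
                rw [pow_succ']
          _ ≤ 2 ^ (L.length - 1) := hexp
    _ ≤ H n L := h2

lemma H_main (B : ℕ) : ∀ (L L' : List ℕ) (n : ℕ), L ≠ [] → L' ≠ [] → L ≠ L' →
    (∀ a ∈ L, a ≤ B) → (∀ a ∈ L', a ≤ B) → 4 * B + 5 ≤ n →
    H n L ≠ H n L' := by
  intro L
  induction L with
  | nil => intro L' n hne; exact absurd rfl hne
  | cons a rest ih =>
    intro L' n _ hL'ne hne hL hL' hn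
    rcases L' with _ | ⟨a', rest'⟩
    · exact absurd rfl hL'ne
    rcases Nat.lt_trichotomy (a' :: rest').length (a :: rest).length with hlt | heq | hgt
    · exact (H_cross B _ _ n hL hlt (by simp) hn).ne'
    swap
    · exact (H_cross B _ _ n hL' hgt (by simp) hn).ne
    -- equal lengths
    have ha : a ≤ B := hL a (List.mem_cons_self)
    have ha' : a' ≤ B := hL' a' (List.mem_cons_self)
    rcases Nat.lt_trichotomy a a' with haa | rfl | haa
    · -- a < a', use separation (strict)
      rcases rest with _ | ⟨b, rrest⟩
      · have : rest' = [] := by simpa using heq.symm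
        subst this
        rw [H_single, H_single]
        omega
      · rcases rest' with _ | ⟨b', rrest'⟩
        · simp at heq
        rw [H_cons_cons, H_cons_cons]
        have hq : n - a' + 1 ≤ n - a := by omega
        have hq2 : 3 * B + 5 ≤ n - a' := by omega
        have hsep : H ((n - a') ^ 2 + 1) (b' :: rrest') < H ((n - a) ^ 2 + 1) (b :: rrest) := by
          apply H_sep B _ _ _ _ (by simpa using heq.symm) (by simp)
            (fun x hx => hL x (List.mem_cons_of_mem _ hx))
            (fun x hx => hL' x (List.mem_cons_of_mem _ hx))
          · nlinarith
          · nlinarith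
        exact hsep.ne'
    · -- equal heads, recurse
      rcases rest with _ | ⟨b, rrest⟩
      · have : rest' = [] := by simpa using heq.symm
        subst this
        exact absurd rfl hne
      · rcases rest' with _ | ⟨b', rrest'⟩
        · simp at heq
        rw [H_cons_cons, H_cons_cons]
        apply ih (b' :: rrest') _ (by simp) (by simp)
          (by intro hcontra; rw [hcontra] at hne; exact hne rfl)
          (fun x hx => hL x (List.mem_cons_of_mem _ hx))
          (fun x hx => hL' x (List.mem_cons_of_mem _ hx))
        have hq2 : 3 * B + 5 ≤ n - a := by omega
        nlinarith
    · -- a' < a, symmetric separation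
      rcases rest with _ | ⟨b, rrest⟩
      · have : rest' = [] := by simpa using heq.symm
        subst this
        rw [H_single, H_single]
        omega
      · rcases rest' with _ | ⟨b', rrest'⟩
        · simp at heq
        rw [H_cons_cons, H_cons_cons]
        have hq : n - a + 1 ≤ n - a' := by omega
        have hq2 : 3 * B + 5 ≤ n - a := by omega
        have hsep : H ((n - a) ^ 2 + 1) (b :: rrest) < H ((n - a') ^ 2 + 1) (b' :: rrest') := by
          apply H_sep B _ _ _ _ (by simpa using heq) (by simp)
            (fun x hx => hL' x (List.mem_cons_of_mem _ hx))
            (fun x hx => hL x (List.mem_cons_of_mem _ hx))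
          · nlinarith
          · nlinarith
        exact hsep.ne

/-- MAIN combinatorial fact: distinct words act differently on eₙ for n large. -/
lemma h_ne (u v : List (Fin 2)) (n : ℕ) (huv : u ≠ v)
    (hn : 4 * (max u.length v.length) + 5 ≤ n) : h n u ≠ h n v := by
  set B := max u.length v.length with hB
  rw [h_eq_H, h_eq_H]
  apply H_main B _ _ _ (blocks_ne_nil u) (blocks_ne_nil v)
    (fun hc => huv (blocks_injective u v hc))
    (fun a ha => le_trans (blocks_entry_le u a ha) (le_max_left _ _))
    (fun a ha => le_trans (blocks_entry_le v a ha) (le_max_right _ _)) hn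

end FreeTwoPrim

namespace FreeTwoPrim

noncomputable section
open Finsupp
variable (k : Type) [Field k]

def Xop : (ℕ →₀ k) →ₗ[k] (ℕ →₀ k) :=
  Finsupp.lsum k fun i => if i = 0 then 0 else Finsupp.lsingle (i - 1)
def Yop : (ℕ →₀ k) →ₗ[k] (ℕ →₀ k) :=
  Finsupp.lsum k fun i => Finsupp.lsingle (i ^ 2 + 1)
def phi : FreeAlgebra k (Fin 2) →ₐ[k] Module.End k (ℕ →₀ k) :=
  FreeAlgebra.lift k ![Xop k, Yop k]

lemma Xop_single (i : ℕ) (c : k) :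
    Xop k (Finsupp.single i c) = if i = 0 then 0 else Finsupp.single (i - 1) c := by
  rw [Xop, Finsupp.lsum_single]
  split_ifs <;> simp

lemma Yop_single (i : ℕ) (c : k) :
    Yop k (Finsupp.single i c) = Finsupp.single (i ^ 2 + 1) c := by
  rw [Yop, Finsupp.lsum_single, Finsupp.lsingle_apply]

lemma op_single (s : Fin 2) (m : ℕ) (hm : 1 ≤ m ∨ s = 1) :
    (![Xop k, Yop k] s) (Finsupp.single m (1 : k)) = Finsupp.single (step s m) 1 := by
  rcases (by omega : s = 0 ∨ s = 1) with rfl | rfl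
  · have hm1 : 1 ≤ m := by rcases hm with h | h; exact h; exact absurd h (by omega)
    rw [Matrix.cons_val_zero, Xop_single, step0, if_neg (by omega)]
  · rw [Matrix.cons_val_one, Matrix.cons_val_zero, Yop_single, step1]

def Wop : FreeMonoid (Fin 2) →* Module.End k (ℕ →₀ k) :=
  FreeMonoid.lift ![Xop k, Yop k]

lemma Wop_single (l : List (Fin 2)) (n : ℕ) (hn : l.length ≤ n) :
    Wop k (FreeMonoid.ofList l) (Finsupp.single n (1 : k)) =
      Finsupp.single (h n l.reverse) 1 := by
  induction l with
  | nil =>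
    have : Wop k (FreeMonoid.ofList []) = 1 := map_one _
    rw [this]
    rfl
  | cons s t ih =>
    have hsplit : FreeMonoid.ofList (s :: t) = FreeMonoid.of s * FreeMonoid.ofList t := rfl
    rw [hsplit, map_mul, Module.End.mul_apply, ih (by simpa using Nat.le_of_succ_le hn)]
    have hWof : Wop k (FreeMonoid.of s) = ![Xop k, Yop k] s := FreeMonoid.lift_eval_of _ s
    rw [hWof]
    have hm : 1 ≤ h n t.reverse ∨ s = 1 := by
      left
      have := le_h_add n t.reverse
      simp only [List.length_reverse] at this
      simp only [List.length_cons] at hn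
      omega
    rw [op_single k s _ hm, List.reverse_cons, h_append_single]

lemma phi_lift_eq_Wop (w : FreeMonoid (Fin 2)) :
    phi k (FreeMonoid.lift (FreeAlgebra.ι k) w) = Wop k w := by
  refine FreeMonoid.recOn w ?_ ?_
  · rw [map_one, map_one, map_one]
  · intro x y ih
    rw [map_mul, map_mul, map_mul, ih]
    congr 1
    rw [FreeMonoid.lift_eval_of, phi, FreeAlgebra.lift_ι_apply, Wop, FreeMonoid.lift_eval_of]

lemma phi_inj (p : FreeAlgebra k (Fin 2)) (hp : phi k p = 0) : p = 0 := by
  classical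
  set A := FreeAlgebra.equivMonoidAlgebraFreeMonoid (R := k) (X := Fin 2) with hA
  by_contra hne
  set q : MonoidAlgebra k (FreeMonoid (Fin 2)) := A p with hq
  have hq0 : q ≠ 0 := fun h => hne (by
    have := congrArg A.symm (hq.symm.trans h)
    rwa [A.symm_apply_apply, map_zero] at this)
  have hpq : p = (MonoidAlgebra.lift k (FreeAlgebra k (Fin 2)) (FreeMonoid (Fin 2))
      (FreeMonoid.lift (FreeAlgebra.ι k))) q := by
    have : p = A.symm q := (A.symm_apply_apply p).symm
    rw [this, hA, FreeAlgebra.equivMonoidAlgebraFreeMonoid]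
    simp [AlgEquiv.ofAlgHom]
  have hsum : phi k p = q.coeff.sum fun w c => c • Wop k w := by
    rw [hpq, MonoidAlgebra.lift_apply, map_finsuppSum]
    refine Finsupp.sum_congr fun w _ => ?_
    rw [map_smul, phi_lift_eq_Wop]
  -- choose a large N
  set B := q.coeff.support.sup (fun w => (FreeMonoid.toList w).length) with hB
  set N := 4 * B + 5 with hN
  obtain ⟨w₀, hw₀⟩ := Finsupp.support_nonempty_iff.mpr (MonoidAlgebra.coeff_eq_zero.not.mpr hq0)
  have happ : (0 : ℕ →₀ k) = ∑ w ∈ q.coeff.support,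
      q.coeff w • Finsupp.single (h N (FreeMonoid.toList w).reverse) (1 : k) := by
    have h0 : (phi k p) (Finsupp.single N (1 : k)) = 0 := by rw [hp]; rfl
    rw [hsum, Finsupp.sum] at h0
    rw [LinearMap.coe_sum, Finset.sum_apply] at h0
    rw [← h0]
    refine (Finset.sum_congr rfl fun w hw => ?_)
    rw [LinearMap.smul_apply]
    congr 1
    have hlen : (FreeMonoid.toList w).length ≤ N := by
      have hh : (FreeMonoid.toList w).length ≤ B :=
        Finset.le_sup (f := fun w => (FreeMonoid.toList w).length) hw
      omega
    have := Wop_single k (FreeMonoid.toList w) N hlen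
    rwa [FreeMonoid.ofList_toList] at this
  have hval := congrFun (congrArg (DFunLike.coe) happ)
      (h N (FreeMonoid.toList w₀).reverse)
  rw [Finsupp.finset_sum_apply] at hval
  simp only [Finsupp.coe_zero, Pi.zero_apply] at hval
  have hzero : q.coeff w₀ = 0 := by
    rw [Finset.sum_eq_single_of_mem w₀ hw₀] at hval
    · rw [Finsupp.smul_apply, Finsupp.single_eq_same, smul_eq_mul, mul_one] at hval
      exact hval.symm
    · intro w hw hwne
      rw [Finsupp.smul_apply, Finsupp.single_apply, if_neg, smul_zero]
      apply h_ne
      · intro hc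
        apply hwne
        have h3 := List.reverse_injective hc
        have h4 := congrArg FreeMonoid.ofList h3
        rwa [FreeMonoid.ofList_toList, FreeMonoid.ofList_toList] at h4
      · have h1 : (FreeMonoid.toList w).length ≤ B :=
          Finset.le_sup (f := fun w => (FreeMonoid.toList w).length) hw
        have h2 : (FreeMonoid.toList w₀).length ≤ B :=
          Finset.le_sup (f := fun w => (FreeMonoid.toList w).length) hw₀
        simp only [List.length_reverse]
        omega
  exact (Finsupp.mem_support_iff.mp hw₀) hzero

end
end FreeTwoPrim

namespace FreeTwoPrim

noncomputable section
variable (k : Type) [Field k]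

lemma Xpow_single (a i : ℕ) (c : k) :
    ((Xop k) ^ a) (Finsupp.single i c) =
      if a ≤ i then Finsupp.single (i - a) c else 0 := by
  induction a generalizing i with
  | zero => simp
  | succ a ih =>
    rw [pow_succ, Module.End.mul_apply, Xop_single]
    rcases i with _ | i'
    · rw [if_pos rfl, map_zero, if_neg (by omega)]
    · rw [if_neg (Nat.succ_ne_zero i'), Nat.add_sub_cancel, ih]
      by_cases hai : a ≤ i'
      · rw [if_pos hai, if_pos (by omega)]
        congr 1
        omega
      · rw [if_neg hai, if_neg (by omega)]

lemma aux_faithful :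
    letI : Module (FreeAlgebra k (Fin 2)) (ℕ →₀ k) := Module.compHom _ (phi k).toRingHom
    FaithfulSMul (FreeAlgebra k (Fin 2)) (ℕ →₀ k) := by
  letI : Module (FreeAlgebra k (Fin 2)) (ℕ →₀ k) := Module.compHom _ (phi k).toRingHom
  refine ⟨fun {a b} hab => ?_⟩
  have heq : phi k a = phi k b := LinearMap.ext fun m => hab m
  have h2 : phi k (a - b) = 0 := by rw [map_sub, heq, sub_self]
  exact sub_eq_zero.mp (phi_inj k _ h2)

lemma aux_simple :
    letI : Module (FreeAlgebra k (Fin 2)) (ℕ →₀ k) := Module.compHom _ (phi k).toRingHom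
    IsSimpleModule (FreeAlgebra k (Fin 2)) (ℕ →₀ k) := by
  classical
  letI : Module (FreeAlgebra k (Fin 2)) (ℕ →₀ k) := Module.compHom _ (phi k).toRingHom
  have smul_def : ∀ (a : FreeAlgebra k (Fin 2)) (m : ℕ →₀ k), a • m = phi k a m :=
    fun _ _ => rfl
  have hphiX : phi k (FreeAlgebra.ι k (0 : Fin 2)) = Xop k := by
    rw [phi, FreeAlgebra.lift_ι_apply, Matrix.cons_val_zero]
  have hphiY : phi k (FreeAlgebra.ι k (1 : Fin 2)) = Yop k := by
    rw [phi, FreeAlgebra.lift_ι_apply, Matrix.cons_val_one, Matrix.cons_val_zero]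
  have halg : ∀ (c : k) (m : ℕ →₀ k),
      (algebraMap k (FreeAlgebra k (Fin 2)) c) • m = c • m := by
    intro c m
    rw [smul_def, AlgHom.commutes, Module.algebraMap_end_apply]
  haveI : Nontrivial (Submodule (FreeAlgebra k (Fin 2)) (ℕ →₀ k)) := by
    refine ⟨⊥, ⊤, fun hcontra => ?_⟩
    have hmem : (Finsupp.single 0 1 : ℕ →₀ k) ∈ (⊥ : Submodule (FreeAlgebra k (Fin 2)) (ℕ →₀ k)) := by
      rw [hcontra]; trivial
    rw [Submodule.mem_bot] at hmem
    exact one_ne_zero (Finsupp.single_eq_zero.mp hmem)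
  refine { eq_bot_or_eq_top := fun N => ?_ }
  rcases eq_or_ne N ⊥ with hbot | hbot
  · exact Or.inl hbot
  right
  obtain ⟨v, hvN, hv0⟩ := (Submodule.ne_bot_iff N).mp hbot
  have hsupp : v.support.Nonempty := Finsupp.support_nonempty_iff.mpr hv0
  set n := v.support.max' hsupp with hn
  -- step 1 : e₀ ∈ N
  have hXnv : ((FreeAlgebra.ι k (0 : Fin 2)) ^ n) • v = Finsupp.single 0 (v n) := by
    rw [smul_def, map_pow, hphiX]
    conv_lhs => rw [← Finsupp.sum_single v, Finsupp.sum, map_sum]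
    rw [Finset.sum_eq_single_of_mem n (v.support.max'_mem hsupp)]
    · rw [Xpow_single, if_pos le_rfl, Nat.sub_self]
    · intro b hb hbn
      rw [Xpow_single, if_neg]
      have := v.support.le_max' b hb
      omega
  have hvn0 : v n ≠ 0 := Finsupp.mem_support_iff.mp (v.support.max'_mem hsupp)
  have he0 : (Finsupp.single 0 1 : ℕ →₀ k) ∈ N := by
    have h1 : Finsupp.single 0 (v n) ∈ N := by rw [← hXnv]; exact N.smul_mem _ hvN
    have h2 : (algebraMap k (FreeAlgebra k (Fin 2)) (v n)⁻¹) • Finsupp.single 0 (v n) =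
        (Finsupp.single 0 1 : ℕ →₀ k) := by
      rw [halg, Finsupp.smul_single, smul_eq_mul, inv_mul_cancel₀ hvn0]
    rw [← h2]
    exact N.smul_mem _ h1
  -- step 2 : all eⱼ ∈ N
  have hall : ∀ j : ℕ, (Finsupp.single j 1 : ℕ →₀ k) ∈ N := by
    intro j
    induction j with
    | zero => exact he0
    | succ j ihj =>
      have hy : (Finsupp.single (j ^ 2 + 1) 1 : ℕ →₀ k) ∈ N := by
        have : (FreeAlgebra.ι k (1 : Fin 2)) • (Finsupp.single j 1 : ℕ →₀ k) =
            Finsupp.single (j ^ 2 + 1) 1 := by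
          rw [smul_def, hphiY, Yop_single]
        rw [← this]
        exact N.smul_mem _ ihj
      have hx : ((FreeAlgebra.ι k (0 : Fin 2)) ^ (j ^ 2 - j)) •
          (Finsupp.single (j ^ 2 + 1) 1 : ℕ →₀ k) = Finsupp.single (j + 1) 1 := by
        rw [smul_def, map_pow, hphiX, Xpow_single, if_pos (by omega)]
        congr 1
        have hj2 : j ≤ j ^ 2 := Nat.le_self_pow two_ne_zero j
        omega
      rw [← hx]
      exact N.smul_mem _ hy
  -- step 3 : N = ⊤
  rw [Submodule.eq_top_iff']
  intro w
  have hw := (Finsupp.sum_single w).symm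
  rw [Finsupp.sum] at hw
  rw [hw]
  apply Submodule.sum_mem
  intro i _
  have : (algebraMap k (FreeAlgebra k (Fin 2)) (w i)) • (Finsupp.single i 1 : ℕ →₀ k) =
      Finsupp.single i (w i) := by
    rw [halg, Finsupp.smul_single, smul_eq_mul, mul_one]
  rw [← this]
  exact N.smul_mem _ (hall i)

end
end FreeTwoPrim

/-- The free algebra k⟨x,y⟩ is left primitive: the vector space with basis e₀, e₁, …
on which x acts by x·eᵢ = e_{i-1} (e_{-1} = 0) and y acts by y·eᵢ = e_{i²+1} is a
faithful simple left k⟨x,y⟩-module. -/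
theorem freeAlgebra_two_gens_left_primitive (k : Type) [Field k] :
    let X : (ℕ →₀ k) →ₗ[k] (ℕ →₀ k) :=
      Finsupp.lsum k fun i => if i = 0 then 0 else Finsupp.lsingle (i - 1)
    let Y : (ℕ →₀ k) →ₗ[k] (ℕ →₀ k) :=
      Finsupp.lsum k fun i => Finsupp.lsingle (i ^ 2 + 1)
    let φ : FreeAlgebra k (Fin 2) →ₐ[k] Module.End k (ℕ →₀ k) :=
      FreeAlgebra.lift k ![X, Y]
    letI : Module (FreeAlgebra k (Fin 2)) (ℕ →₀ k) := Module.compHom _ φ.toRingHom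
    FaithfulSMul (FreeAlgebra k (Fin 2)) (ℕ →₀ k) ∧
      IsSimpleModule (FreeAlgebra k (Fin 2)) (ℕ →₀ k) := by
  intro X Y φ
  exact ⟨FreeTwoPrim.aux_faithful k, FreeTwoPrim.aux_simple k⟩
end

section
/- Let A = k⟨x, y⟩ be the free algebra on two generators over a field k. The subalgebra k + Ay is a free algebra on the countably infinite set of generators {y, xy, x²y, x³y, …}. -/
/-- The code word for `n`: `n` zeros followed by a one. -/
def kAyGword (n : ℕ) : List (Fin 2) := List.replicate n 0 ++ [1]

lemma kAyGword_key : ∀ (a b : ℕ) (s t : List (Fin 2)),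
    List.replicate a (0 : Fin 2) ++ 1 :: s = List.replicate b 0 ++ 1 :: t → a = b ∧ s = t := by
  intro a
  induction a with
  | zero =>
    intro b s t h
    cases b with
    | zero => simpa using h
    | succ b => simp [List.replicate_succ] at h
  | succ a ih =>
    intro b s t h
    cases b with
    | zero => simp [List.replicate_succ] at h
    | succ b =>
      simp only [List.replicate_succ, List.cons_append, List.cons.injEq, true_and] at h
      obtain ⟨h1, h2⟩ := ih b s t h
      exact ⟨by omega, h2⟩

lemma kAyGflat_inj : ∀ (l l' : List ℕ), l.flatMap kAyGword = l'.flatMap kAyGword → l = l' := by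
  intro l
  induction l with
  | nil =>
    intro l' h
    cases l' with
    | nil => rfl
    | cons a t => simp [kAyGword] at h
  | cons a t ih =>
    intro l' h
    cases l' with
    | nil => simp [kAyGword] at h
    | cons b t' =>
      simp only [List.flatMap_cons, kAyGword, List.append_assoc, List.singleton_append] at h
      obtain ⟨h1, h2⟩ := kAyGword_key a b _ _ h
      exact h1 ▸ (ih t' h2) ▸ rfl

lemma kAyGflat_surj : ∀ (l : List (Fin 2)), ∃ m : List ℕ, m.flatMap kAyGword = l ++ [1] := by
  intro l
  induction l with
  | nil => exact ⟨[0], rfl⟩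
  | cons i t ih =>
    obtain ⟨m, hm⟩ := ih
    fin_cases i
    · cases m with
      | nil => simp at hm
      | cons a m' =>
        refine ⟨(a + 1) :: m', ?_⟩
        simp only [List.flatMap_cons, kAyGword, List.replicate_succ, List.cons_append,
          List.append_assoc] at hm ⊢
        rw [hm]
        rfl
    · exact ⟨0 :: m, by simp [kAyGword, hm]⟩

/-- The monoid homomorphism sending the generator `n` to the word `0ⁿ1`. -/
noncomputable def kAyF : FreeMonoid ℕ →* FreeMonoid (Fin 2) :=
  FreeMonoid.lift fun n => FreeMonoid.ofList (kAyGword n)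

lemma kAyF_toList (w : FreeMonoid ℕ) :
    FreeMonoid.toList (kAyF w) = (FreeMonoid.toList w).flatMap kAyGword := by
  simp only [kAyF, FreeMonoid.lift_apply, FreeMonoid.toList_prod, List.map_map]
  rw [List.flatMap]
  rfl

lemma kAyF_inj : Function.Injective kAyF := by
  intro w w' h
  have h2 : (FreeMonoid.toList w).flatMap kAyGword = (FreeMonoid.toList w').flatMap kAyGword := by
    rw [← kAyF_toList, ← kAyF_toList, h]
  exact FreeMonoid.toList.injective (kAyGflat_inj _ _ h2)

section
variable (k : Type) [Field k]

lemma kAy_prod_gword (m : List ℕ) :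
    (m.map fun n => (FreeAlgebra.ι k (0 : Fin 2)) ^ n * FreeAlgebra.ι k 1).prod
      = ((m.flatMap kAyGword).map (FreeAlgebra.ι k)).prod := by
  induction m with
  | nil => simp
  | cons a t ih =>
    simp [kAyGword, List.prod_replicate, ih, mul_assoc]

lemma kAy_span_top :
    Submodule.span k (Set.range fun l : List (Fin 2) => (l.map (FreeAlgebra.ι k)).prod)
      = ⊤ := by
  rw [eq_top_iff]
  rintro a -
  induction a using FreeAlgebra.induction with
  | grade0 r =>
    rw [Algebra.algebraMap_eq_smul_one]
    exact Submodule.smul_mem _ _ (Submodule.subset_span ⟨[], by simp⟩)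
  | grade1 i => exact Submodule.subset_span ⟨[i], by simp⟩
  | add a b ha hb => exact add_mem ha hb
  | mul a b ha hb =>
    have hle : Submodule.span k (Set.range fun l : List (Fin 2) => (l.map (FreeAlgebra.ι k)).prod) *
        Submodule.span k (Set.range fun l : List (Fin 2) => (l.map (FreeAlgebra.ι k)).prod) ≤
        Submodule.span k (Set.range fun l : List (Fin 2) => (l.map (FreeAlgebra.ι k)).prod) := by
      rw [Submodule.span_mul_span]
      apply Submodule.span_le.2
      rintro _ ⟨u, ⟨l₁, rfl⟩, v, ⟨l₂, rfl⟩, rfl⟩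
      exact Submodule.subset_span ⟨l₁ ++ l₂, by simp⟩
    exact hle (Submodule.mul_mem_mul ha hb)

end

/-- In A = k⟨x,y⟩, the subalgebra k + Ay is free on the countably infinite
set of generators {y, xy, x²y, …}: the algebra map from the free algebra on ℕ
sending n to xⁿy is injective, and its range is exactly k + Ay. -/
theorem k_plus_Ay_is_free
    (k : Type) [Field k] :
    let A := FreeAlgebra k (Fin 2)
    let x : A := FreeAlgebra.ι k 0
    let y : A := FreeAlgebra.ι k 1
    let ψ : FreeAlgebra k ℕ →ₐ[k] A := FreeAlgebra.lift k fun n => x ^ n * y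
    Function.Injective ψ ∧
      (ψ.range : Set A) = {z : A | ∃ (c : k) (a : A), z = algebraMap k A c + a * y} := by
  intro A x y ψ
  have hι : ∀ n : ℕ, ψ (FreeAlgebra.ι k n) = x ^ n * y := fun n => FreeAlgebra.lift_ι_apply _ _
  -- ψ is the map induced by kAyF on monoid algebras
  have hψ : ψ = ((FreeAlgebra.equivMonoidAlgebraFreeMonoid (R := k) (X := Fin 2)).symm.toAlgHom.comp
      ((MonoidAlgebra.mapDomainAlgHom k k kAyF).comp
        (FreeAlgebra.equivMonoidAlgebraFreeMonoid (R := k) (X := ℕ)).toAlgHom)) := by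
    apply FreeAlgebra.hom_ext
    funext n
    show ψ (FreeAlgebra.ι k n) = _
    have h1 : ψ (FreeAlgebra.ι k n) = x ^ n * y := FreeAlgebra.lift_ι_apply _ _
    have h2 : (FreeAlgebra.equivMonoidAlgebraFreeMonoid (R := k)) (FreeAlgebra.ι k n)
        = MonoidAlgebra.of k (FreeMonoid ℕ) (FreeMonoid.of n) := by
      simp [FreeAlgebra.equivMonoidAlgebraFreeMonoid]
    have h3 : MonoidAlgebra.mapDomain kAyF (MonoidAlgebra.of k (FreeMonoid ℕ) (FreeMonoid.of n))
        = MonoidAlgebra.of k (FreeMonoid (Fin 2)) (FreeMonoid.ofList (kAyGword n)) := by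
      rw [MonoidAlgebra.of_apply, MonoidAlgebra.of_apply, MonoidAlgebra.mapDomain_single]
      rfl
    have h4 : (FreeAlgebra.equivMonoidAlgebraFreeMonoid (R := k)).symm
        (MonoidAlgebra.of k (FreeMonoid (Fin 2)) (FreeMonoid.ofList (kAyGword n)))
        = FreeMonoid.lift (FreeAlgebra.ι k) (FreeMonoid.ofList (kAyGword n)) := by
      simp [FreeAlgebra.equivMonoidAlgebraFreeMonoid]
    have h5 : FreeMonoid.lift (FreeAlgebra.ι k) (FreeMonoid.ofList (kAyGword n)) = x ^ n * y := by
      rw [FreeMonoid.lift_apply]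
      show ((kAyGword n).map (FreeAlgebra.ι k)).prod = _
      simp [kAyGword, List.prod_replicate, x, y]
    simp only [AlgHom.coe_comp, AlgEquiv.coe_algHom, Function.comp_apply, h1, h2,
      MonoidAlgebra.mapDomainAlgHom_apply, h3, h4, h5]
  constructor
  · -- injectivity
    rw [hψ]
    simp only [AlgHom.coe_comp, AlgEquiv.coe_algHom]
    exact (FreeAlgebra.equivMonoidAlgebraFreeMonoid (R := k) (X := Fin 2)).symm.injective.comp
      ((MonoidAlgebra.mapDomain_injective kAyF_inj).comp
        (FreeAlgebra.equivMonoidAlgebraFreeMonoid (R := k) (X := ℕ)).injective)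
  · -- the range
    have key : ∀ a : A, a * y ∈ ψ.range := by
      intro a
      have ha : a ∈ Submodule.span k
          (Set.range fun l : List (Fin 2) => (l.map (FreeAlgebra.ι k)).prod) := by
        rw [kAy_span_top]; trivial
      induction ha using Submodule.span_induction with
      | mem z hz =>
        obtain ⟨l, rfl⟩ := hz
        obtain ⟨m, hm⟩ := kAyGflat_surj l
        refine ⟨(m.map (FreeAlgebra.ι k)).prod, ?_⟩
        have hcomp : ∀ m' : List ℕ,
            ψ ((m'.map (FreeAlgebra.ι k)).prod) = (m'.map fun n => x ^ n * y).prod := by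
          intro m'
          induction m' with
          | nil => simp
          | cons a t iht => simp [iht, hι]
        have hpg : (m.map fun n => x ^ n * y).prod
            = ((m.flatMap kAyGword).map (FreeAlgebra.ι k)).prod := kAy_prod_gword k m
        show ψ ((m.map (FreeAlgebra.ι k)).prod) = _
        rw [hcomp, hpg, hm]
        simp [y]
      | zero => simpa using ψ.range.zero_mem
      | add u v hu hv hu' hv' => rw [add_mul]; exact add_mem hu' hv'
      | smul c u hu hu' => rw [smul_mul_assoc]; exact Subalgebra.smul_mem _ hu' c
    apply Set.eq_of_subset_of_subset
    · rintro z ⟨w, rfl⟩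
      induction w using FreeAlgebra.induction with
      | grade0 r => exact ⟨r, 0, by simp⟩
      | grade1 n =>
        refine ⟨0, x ^ n, ?_⟩
        show ψ (FreeAlgebra.ι k n) = _
        rw [hι, map_zero, zero_add]
      | add a b ha hb =>
        obtain ⟨c₁, a₁, h₁⟩ := ha
        obtain ⟨c₂, a₂, h₂⟩ := hb
        refine ⟨c₁ + c₂, a₁ + a₂, ?_⟩
        rw [map_add, h₁, h₂, map_add, add_mul]
        abel
      | mul a b ha hb =>
        obtain ⟨c₁, a₁, h₁⟩ := ha
        obtain ⟨c₂, a₂, h₂⟩ := hb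
        refine ⟨c₁ * c₂, algebraMap k A c₁ * a₂ + a₁ * algebraMap k A c₂ + a₁ * y * a₂, ?_⟩
        rw [map_mul, h₁, h₂, map_mul]
        have hc : y * algebraMap k A c₂ = algebraMap k A c₂ * y := (Algebra.commutes _ _).symm
        simp only [mul_add, add_mul, mul_assoc, hc]
        abel
    · rintro z ⟨c, a, rfl⟩
      simp only [SetLike.mem_coe]
      exact add_mem ⟨algebraMap k (FreeAlgebra k ℕ) c, ψ.commutes c⟩ (key a)
end

section
/- A free associative algebra over a field on a countably infinite set of generators is left primitive. -/
/-- A ring is left primitive if it admits a faithful simple left module. -/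
def IsLeftPrimitiveRing.{u} (R : Type u) [Ring R] : Prop :=
  ∃ (M : Type u) (_ : AddCommGroup M) (_ : Module R M),
    IsSimpleModule R M ∧ FaithfulSMul R M

namespace FreePrimAux

/-- encoding of a word into a {0,1}-word, injective, ending in [1,1] -/
def γ (w : List ℕ) : List ℕ := List.replicate (Encodable.encode w) 0 ++ [1, 1]

lemma γ_injective : Function.Injective γ := by
  intro a b h
  have hlen : (γ a).length = (γ b).length := by rw [h]
  simp only [γ, List.length_append, List.length_replicate] at hlen
  have : Encodable.encode a = Encodable.encode b := by omega
  exact Encodable.encode_injective this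

lemma γ_letters {x : ℕ} {w : List ℕ} (hx : x ∈ γ w) : x ≤ 1 := by
  simp only [γ, List.mem_append, List.mem_replicate] at hx
  rcases hx with h | h
  · omega
  · simp at h; omega

lemma γ_length {w : List ℕ} : 2 ≤ (γ w).length := by
  simp [γ]

/-- "good" marked words: w ++ M :: γ w -/
def Sg (z : List ℕ) : Prop := ∃ w M, z = w ++ M :: γ w ∧ 2 ≤ M ∧ ∀ x ∈ w, x < M

/-- "bad" marked words -/
def Sb (z : List ℕ) : Prop :=
  ∃ w v M, z = w ++ M :: γ v ∧ 2 ≤ M ∧ (∀ x ∈ w, x < M) ∧ ¬ (w <:+ v) ∧ ¬ (v <:+ w)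

lemma decomp_unique {w₁ w₂ v₁ v₂ : List ℕ} {M₁ M₂ : ℕ}
    (h : w₁ ++ M₁ :: γ v₁ = w₂ ++ M₂ :: γ v₂)
    (h1 : 2 ≤ M₁) (h2 : 2 ≤ M₂) :
    w₁ = w₂ ∧ M₁ = M₂ ∧ v₁ = v₂ := by
  rcases List.append_eq_append_iff.mp h with ⟨a, ha, ha2⟩ | ⟨c, hc, hc2⟩
  · match a, ha2 with
    | [], ha2 =>
      simp only [List.nil_append, List.cons.injEq] at ha2
      simp only [List.append_nil] at ha
      exact ⟨ha.symm, ha2.1, γ_injective ha2.2⟩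
    | (x :: a'), ha2 =>
      simp only [List.cons_append, List.cons.injEq] at ha2
      have : M₂ ∈ γ v₁ := by rw [ha2.2]; simp
      have := γ_letters this
      omega
  · match c, hc2 with
    | [], hc2 =>
      simp only [List.nil_append, List.cons.injEq] at hc2
      simp only [List.append_nil] at hc
      exact ⟨hc, hc2.1.symm, γ_injective hc2.2.symm⟩
    | (x :: c'), hc2 =>
      simp only [List.cons_append, List.cons.injEq] at hc2
      have : M₁ ∈ γ v₂ := by rw [hc2.2]; simp
      have := γ_letters this
      omega


lemma suffix_decomp {w v w' v' : List ℕ} {M M' : ℕ}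
    (hM : 2 ≤ M) (hM' : 2 ≤ M')
    (ht : (w' ++ M' :: γ v') <:+ (w ++ M :: γ v))
    (hne : (w' ++ M' :: γ v') ≠ (w ++ M :: γ v)) :
    w' <:+ w ∧ w' ≠ w ∧ M' = M ∧ v' = v := by
  obtain ⟨s, hs⟩ := ht
  rcases List.append_eq_append_iff.mp hs with ⟨a, ha, ha2⟩ | ⟨c, hc, hc2⟩
  · obtain ⟨h1, h2, h3⟩ := decomp_unique ha2 hM' hM
    subst h1 h2 h3
    refine ⟨⟨s, ha.symm⟩, fun hEq => hne (by rw [hEq]), rfl, rfl⟩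
  · match c, hc2 with
    | [], hc2 =>
      simp only [List.append_nil] at hc
      simp only [List.nil_append] at hc2
      obtain ⟨h1, h2, h3⟩ := decomp_unique (show w' ++ M' :: γ v' = [] ++ M :: γ v by simpa using hc2.symm) hM' hM
      subst h1 h2 h3
      exact ⟨List.nil_suffix, fun hEq => hne (by rw [← hEq]), rfl, rfl⟩
    | (x :: c'), hc2 =>
      simp only [List.cons_append, List.cons.injEq] at hc2
      have : M' ∈ γ v := by rw [hc2.2]; simp
      have := γ_letters this
      omega


lemma Sg_ne_nil {z : List ℕ} (h : Sg z) : z ≠ [] := by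
  obtain ⟨w, M, rfl, -, -⟩ := h
  simp

lemma Sb_ne_nil {z : List ℕ} (h : Sb z) : z ≠ [] := by
  obtain ⟨w, v, M, rfl, -, -, -⟩ := h
  simp

/-- proper suffixes of good marked words are unmarked -/
lemma suffix_of_Sg {w t : List ℕ} {M : ℕ} (hM : 2 ≤ M)
    (ht : t <:+ (w ++ M :: γ w)) (hne : t ≠ w ++ M :: γ w) :
    ¬ Sg t ∧ ¬ Sb t := by
  constructor
  · rintro ⟨w', M', rfl, hM', -⟩
    obtain ⟨h1, h2, -, h4⟩ := suffix_decomp hM hM' ht hne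
    exact h2 (h4 ▸ rfl)
  · rintro ⟨w', v', M', rfl, hM', -, hns1, -⟩
    obtain ⟨h1, h2, -, h4⟩ := suffix_decomp hM hM' ht hne
    exact hns1 (h4.symm ▸ h1)

/-- proper suffixes of bad marked words are not good-marked -/
lemma suffix_of_Sb {w v t : List ℕ} {M : ℕ} (hM : 2 ≤ M) (hvw : ¬ v <:+ w)
    (ht : t <:+ (w ++ M :: γ v)) (hne : t ≠ w ++ M :: γ v) :
    ¬ Sg t := by
  rintro ⟨w', M', rfl, hM', -⟩
  obtain ⟨h1, -, -, h4⟩ := suffix_decomp hM hM' ht hne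
  exact hvw (h4 ▸ h1)


noncomputable section ModulePart

open scoped Classical

variable (k : Type) [Field k]

abbrev V := (FreeMonoid ℕ) →₀ k

def ξ : V k := Finsupp.single 1 1

def g (a : ℕ) (t : FreeMonoid ℕ) : V k :=
  if Sg (a :: FreeMonoid.toList t) then - ξ k
  else if Sb (a :: FreeMonoid.toList t) then 0
  else Finsupp.single (FreeMonoid.ofList (a :: FreeMonoid.toList t)) 1

def X (a : ℕ) : V k →ₗ[k] V k := Finsupp.linearCombination k (g k a)

def Φ : FreeMonoid ℕ →* Module.End k (V k) := FreeMonoid.lift (fun a => X k a)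

def evalW (l : List ℕ) : V k := Φ k (FreeMonoid.ofList l) (ξ k)

lemma evalW_nil : evalW k [] = ξ k := by
  have : FreeMonoid.ofList ([] : List ℕ) = 1 := rfl
  simp [evalW, this]

lemma evalW_cons (a : ℕ) (l : List ℕ) : evalW k (a :: l) = X k a (evalW k l) := by
  have h1 : FreeMonoid.ofList (a :: l) = FreeMonoid.of a * FreeMonoid.ofList l :=
    FreeMonoid.ofList_cons a l
  rw [evalW, h1, map_mul]
  rfl

lemma X_single (a : ℕ) (t : FreeMonoid ℕ) :
    X k a (Finsupp.single t 1) = g k a t := by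
  rw [X, Finsupp.linearCombination_single, one_smul]

lemma eval_unmarked : ∀ (l : List ℕ), (∀ t, t <:+ l → ¬ Sg t ∧ ¬ Sb t) →
    evalW k l = Finsupp.single (FreeMonoid.ofList l) 1
  | [], _ => by
    rw [evalW_nil]; rfl
  | (a :: l), h => by
    rw [evalW_cons, eval_unmarked l (fun t ht => h t (ht.trans (List.suffix_cons a l))),
      X_single, g]
    have h2 := h (a :: l) List.suffix_rfl
    rw [if_neg, if_neg]
    · rfl
    · simpa using h2.2
    · simpa using h2.1

lemma eval_bad : ∀ (l : List ℕ), (∀ t, t <:+ l → ¬ Sg t) → (∃ t, t <:+ l ∧ Sb t) →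
    evalW k l = 0
  | [], _, hB => by
    obtain ⟨t, ht, hSb⟩ := hB
    exact absurd (List.suffix_nil.mp ht) (Sb_ne_nil hSb)
  | (a :: l), hS, hB => by
    by_cases hB' : ∃ t, t <:+ l ∧ Sb t
    · rw [evalW_cons, eval_bad l (fun t ht => hS t (ht.trans (List.suffix_cons a l))) hB',
        map_zero]
    · have hSb : Sb (a :: l) := by
        obtain ⟨t, ht, htb⟩ := hB
        rcases List.suffix_cons_iff.mp ht with rfl | ht'
        · exact htb
        · exact absurd ⟨t, ht', htb⟩ hB'
      rw [evalW_cons, eval_unmarked k l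
          (fun t ht => ⟨hS t (ht.trans (List.suffix_cons a l)),
            fun htb => hB' ⟨t, ht, htb⟩⟩),
        X_single, g]
      rw [if_neg, if_pos]
      · simpa using hSb
      · simpa using hS (a :: l) List.suffix_rfl

lemma eval_good (l : List ℕ) (hSg : Sg l)
    (h : ∀ t, t <:+ l → t ≠ l → ¬ Sg t ∧ ¬ Sb t) : evalW k l = - ξ k := by
  match l with
  | [] => exact absurd rfl (Sg_ne_nil hSg)
  | (a :: l') =>
    have hprop : ∀ t, t <:+ l' → ¬ Sg t ∧ ¬ Sb t := by
      intro t ht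
      refine h t (ht.trans (List.suffix_cons a l')) ?_
      intro hEq
      have := ht.length_le
      rw [hEq] at this
      simp at this
    rw [evalW_cons, eval_unmarked k l' hprop, X_single, g, if_pos]
    simpa using hSg

end ModulePart


section Algebra

variable (k : Type) [Field k]

abbrev B := MonoidAlgebra k (FreeMonoid ℕ)

noncomputable def ρ : B k →ₐ[k] Module.End k (V k) :=
  MonoidAlgebra.lift k (Module.End k (V k)) (FreeMonoid ℕ) (Φ k)

lemma ρ_single (z : FreeMonoid ℕ) (d : k) :
    ρ k (MonoidAlgebra.single z d) (ξ k) = d • evalW k (FreeMonoid.toList z) := by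
  rw [ρ, MonoidAlgebra.lift_single, LinearMap.smul_apply, evalW, FreeMonoid.ofList_toList]

lemma mem_le_foldr_max (x : ℕ) : ∀ (l : List ℕ), x ∈ l → x ≤ l.foldr max 0
  | (a :: l), h => by
    rcases List.mem_cons.mp h with rfl | h'
    · simp
    · have := mem_le_foldr_max x l h'
      simp only [List.foldr_cons]
      omega

lemma main_lemma (c : B k) (hc : c ≠ 0) :
    ∃ (u v : B k) (d : k), d ≠ 0 ∧ ρ k (d • 1 + u * c * v) (ξ k) = 0 := by
  obtain ⟨w₁, hw₁⟩ := Finsupp.support_nonempty_iff.mpr (MonoidAlgebra.coeff_eq_zero.not.mpr hc)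
  set P : ℕ := (c.coeff.support.sup (fun w => (FreeMonoid.toList w).foldr max 0)) + 1 with hP
  set M : ℕ := P + 2 with hM
  have hletters : ∀ w ∈ c.coeff.support, ∀ x ∈ FreeMonoid.toList w, x < P := by
    intro w hw x hx
    have h1 := mem_le_foldr_max x _ hx
    have h2 : (FreeMonoid.toList w).foldr max 0
        ≤ c.coeff.support.sup (fun w => (FreeMonoid.toList w).foldr max 0) := by
      simpa using Finset.le_sup (f := fun w => (FreeMonoid.toList w).foldr max 0) hw
    omega
  have hM2 : 2 ≤ M := by omega
  have hPM : P < M := by omega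
  -- bound on letters of P :: w
  have hbound : ∀ w ∈ c.coeff.support, ∀ x ∈ (P :: FreeMonoid.toList w), x < M := by
    intro w hw x hx
    rcases List.mem_cons.mp hx with rfl | h'
    · exact hPM
    · have := hletters w hw x h'
      omega
  -- non-suffix facts
  have hnosuf : ∀ w ∈ c.coeff.support, ∀ w' ∈ c.coeff.support, w ≠ w' →
      ¬ ((P :: FreeMonoid.toList w) <:+ (P :: FreeMonoid.toList w')) := by
    intro w hw w' hw' hne hsuf
    rcases List.suffix_cons_iff.mp hsuf with hEq | hsuf'
    · apply hne
      have h2 : FreeMonoid.toList w = FreeMonoid.toList w' := by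
        injection hEq
      have h3 := congrArg FreeMonoid.ofList h2
      simpa [FreeMonoid.ofList_toList] using h3
    · have hmem : P ∈ FreeMonoid.toList w' := hsuf'.subset (by simp)
      have := hletters w' hw' P hmem
      omega
  -- the words
  set tail : List ℕ := M :: γ (P :: FreeMonoid.toList w₁) with htail
  have hzw : ∀ (w : FreeMonoid ℕ),
      (P :: FreeMonoid.toList w) ++ tail
        = (P :: FreeMonoid.toList w) ++ M :: γ (P :: FreeMonoid.toList w₁) := fun _ => rfl
  -- eval for w₁
  have heval₁ : evalW k ((P :: FreeMonoid.toList w₁) ++ tail) = - ξ k := by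
    apply eval_good
    · exact ⟨P :: FreeMonoid.toList w₁, M, rfl, hM2, hbound w₁ hw₁⟩
    · intro t ht hne
      exact suffix_of_Sg hM2 ht hne
  -- eval for w ≠ w₁
  have heval₂ : ∀ w ∈ c.coeff.support, w ≠ w₁ →
      evalW k ((P :: FreeMonoid.toList w) ++ tail) = 0 := by
    intro w hw hne
    have hSb : Sb ((P :: FreeMonoid.toList w) ++ tail) :=
      ⟨P :: FreeMonoid.toList w, P :: FreeMonoid.toList w₁, M, rfl, hM2, hbound w hw,
        hnosuf w hw w₁ hw₁ hne, hnosuf w₁ hw₁ w hw (fun h => hne h.symm)⟩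
    apply eval_bad
    · intro t ht
      rcases eq_or_ne t ((P :: FreeMonoid.toList w) ++ tail) with rfl | hne'
      · rintro ⟨w', M', hw'eq, hM', -⟩
        obtain ⟨h1, h2, h3⟩ := decomp_unique (hw'eq.symm.trans (hzw w)) hM' hM2
        have : FreeMonoid.toList w = FreeMonoid.toList w₁ := by
          have := h1.symm.trans h3
          simpa using this
        apply hne
        have h3 := congrArg FreeMonoid.ofList this
        simpa [FreeMonoid.ofList_toList] using h3
      · exact suffix_of_Sb hM2 (hnosuf w₁ hw₁ w hw (fun h => hne h.symm)) ht hne'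
    · exact ⟨_, List.suffix_rfl, hSb⟩
  -- assemble
  refine ⟨MonoidAlgebra.single (FreeMonoid.ofList [P]) 1,
    MonoidAlgebra.single (FreeMonoid.ofList tail) 1, c.coeff w₁,
    Finsupp.mem_support_iff.mp hw₁, ?_⟩
  have hsingle : ∀ (w : FreeMonoid ℕ) (d : k),
      MonoidAlgebra.single (FreeMonoid.ofList [P]) (1:k) * MonoidAlgebra.single w d *
        MonoidAlgebra.single (FreeMonoid.ofList tail) 1
      = MonoidAlgebra.single (FreeMonoid.ofList ((P :: FreeMonoid.toList w) ++ tail)) d := by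
    intro w d
    have hword : FreeMonoid.ofList [P] * w * FreeMonoid.ofList tail
        = FreeMonoid.ofList ((P :: FreeMonoid.toList w) ++ tail) := by
      conv_rhs => rw [show (P :: FreeMonoid.toList w) ++ tail
          = ([P] ++ FreeMonoid.toList w) ++ tail from rfl]
      rw [FreeMonoid.ofList_append, FreeMonoid.ofList_append, FreeMonoid.ofList_toList]
    rw [MonoidAlgebra.single_mul_single, MonoidAlgebra.single_mul_single, hword]
    simp
  -- linear map Ψ
  set u := MonoidAlgebra.single (FreeMonoid.ofList [P]) (1:k) with hu
  set v := MonoidAlgebra.single (FreeMonoid.ofList tail) (1:k) with hv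
  have hΨ : ρ k (u * c * v) (ξ k)
      = c.coeff.sum (fun w d => d • evalW k ((P :: FreeMonoid.toList w) ++ tail)) := by
    conv_lhs => rw [← MonoidAlgebra.sum_coeff_single c]
    rw [Finsupp.mul_sum, Finsupp.sum_mul]
    rw [map_finsuppSum (ρ k)]
    rw [Finsupp.sum, Finsupp.sum, LinearMap.coe_sum, Finset.sum_apply]
    apply Finset.sum_congr rfl
    intro w hw
    rw [show u * MonoidAlgebra.single w (c.coeff w) * v
        = MonoidAlgebra.single (FreeMonoid.ofList ((P :: FreeMonoid.toList w) ++ tail)) (c.coeff w)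
      from hsingle w (c.coeff w)]
    rw [ρ_single]
    rw [FreeMonoid.toList_ofList]
  rw [map_add, LinearMap.add_apply, hΨ]
  have hsum : c.coeff.sum (fun w d => d • evalW k ((P :: FreeMonoid.toList w) ++ tail))
      = (c.coeff w₁) • (- ξ k) := by
    rw [Finsupp.sum]
    rw [Finset.sum_eq_single w₁]
    · rw [heval₁]
    · intro w hw hne
      rw [heval₂ w hw hne, smul_zero]
    · intro h
      exact absurd hw₁ h
  rw [hsum]
  rw [map_smul, LinearMap.smul_apply]
  have : (ρ k) 1 (ξ k) = ξ k := by simp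
  rw [this]
  simp

end Algebra


noncomputable section Final

variable (k : Type) [Field k]

def L : Ideal (B k) where
  carrier := {a | ρ k a (ξ k) = 0}
  add_mem' := by
    intro a b ha hb
    simp only [Set.mem_setOf_eq] at *
    rw [map_add, LinearMap.add_apply, ha, hb, add_zero]
  zero_mem' := by simp
  smul_mem' := by
    intro b a ha
    simp only [Set.mem_setOf_eq] at *
    rw [smul_eq_mul, map_mul, Module.End.mul_apply, ha, map_zero]

lemma mem_L_iff (a : B k) : a ∈ L k ↔ ρ k a (ξ k) = 0 := Iff.rfl

lemma L_ne_top : L k ≠ ⊤ := by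
  intro h
  have h1 : (1 : B k) ∈ L k := h ▸ Submodule.mem_top
  rw [mem_L_iff, map_one, Module.End.one_apply] at h1
  exact (one_ne_zero : (1:k) ≠ 0) (Finsupp.single_eq_zero.mp h1)

theorem monoidAlgebra_isLeftPrimitive : IsLeftPrimitiveRing (B k) := by
  obtain ⟨m, hmax, hLm⟩ := Ideal.exists_le_maximal (L k) (L_ne_top k)
  refine ⟨B k ⧸ m, inferInstance, inferInstance, ?_, ?_⟩
  · exact (isSimpleModule_iff_isCoatom).mpr (Ideal.isMaximal_def.mp hmax)
  · constructor
    intro a b h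
    by_contra hne
    have hc : a - b ≠ 0 := sub_ne_zero.mpr hne
    have hmem : ∀ x : B k, (a - b) * x ∈ m := by
      intro x
      have h2 : ((Submodule.Quotient.mk ((a - b) * x) : B k ⧸ m)) = 0 := by
        have e1 : (a - b) * x = a • x - b • x := by
          rw [sub_mul]; rfl
        rw [e1, Submodule.Quotient.mk_sub, Submodule.Quotient.mk_smul,
          Submodule.Quotient.mk_smul, h (Submodule.Quotient.mk x), sub_self]
      exact (Submodule.Quotient.mk_eq_zero m).mp h2
    obtain ⟨u, v, d, hd, heq⟩ := main_lemma k (a - b) hc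
    have hLmem : d • 1 + u * (a - b) * v ∈ m := hLm heq
    have hucv : u * (a - b) * v ∈ m := by
      rw [mul_assoc]
      exact m.smul_mem u (hmem v)
    have h1 : d • (1 : B k) ∈ m := by
      have := Submodule.sub_mem m hLmem hucv
      simpa using this
    have hone : (1 : B k) ∈ m := by
      have h2 : (algebraMap k (B k) d⁻¹) * (d • (1 : B k)) ∈ m := m.smul_mem _ h1
      rwa [← Algebra.smul_def, smul_smul, inv_mul_cancel₀ hd, one_smul] at h2
    exact hmax.ne_top (m.eq_top_iff_one.mpr hone)

theorem transfer {R S : Type} [Ring R] [Ring S] (e : R ≃+* S)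
    (h : IsLeftPrimitiveRing S) : IsLeftPrimitiveRing R := by
  obtain ⟨M, iAG, iM, hsimple, hfaith⟩ := h
  letI : AddCommGroup M := iAG
  letI : Module S M := iM
  letI instR : Module R M := Module.compHom M (e : R →+* S)
  haveI : RingHomSurjective (e : R →+* S) := ⟨e.surjective⟩
  have hsmul : ∀ (r : R) (x : M), r • x = (e r) • x := fun _ _ => rfl
  refine ⟨M, inferInstance, instR, ?_, ?_⟩
  · haveI := hsimple
    let l : M →ₛₗ[(e : R →+* S)] M :=
      { toFun := id, map_add' := fun _ _ => rfl, map_smul' := fun _ _ => rfl }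
    exact (LinearMap.isSimpleModule_iff_of_bijective l Function.bijective_id).mpr hsimple
  · constructor
    intro r r' hrr
    have : e r = e r' := by
      haveI := hfaith
      apply FaithfulSMul.eq_of_smul_eq_smul (α := M)
      intro x
      rw [← hsmul, ← hsmul]
      exact hrr x
    exact e.injective this

end Final

end FreePrimAux

/-- The free associative algebra over a field on countably infinitely many
generators is left primitive. -/
theorem freeAlgebra_countable_gens_left_primitive (k : Type) [Field k] :
    IsLeftPrimitiveRing (FreeAlgebra k ℕ) := by
  exact FreePrimAux.transfer
    (FreeAlgebra.equivMonoidAlgebraFreeMonoid (R := k) (X := ℕ)).toRingEquiv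
    (FreePrimAux.monoidAlgebra_isLeftPrimitive k)
end

section
/- For every natural number d ≥ 2, the free associative algebra k⟨x₁, …, x_d⟩ over a field k is left primitive. -/
open Filter

namespace FreeAlgPrim


/-- step function: letter `j` acting on position `m`. -/
def stepFn (j m : ℕ) : ℕ := if j = 0 then m - 1 else (2*j+1) * 2^m

/-- evaluation of a word on a position -/
def evalW (w : List ℕ) (n : ℕ) : ℕ := w.foldr stepFn n

@[simp] lemma evalW_nil (n : ℕ) : evalW [] n = n := rfl
@[simp] lemma evalW_cons (j : ℕ) (t : List ℕ) (n : ℕ) :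
    evalW (j :: t) n = stepFn j (evalW t n) := rfl

lemma stepFn_zero (m : ℕ) : stepFn 0 m = m - 1 := by simp [stepFn]

lemma stepFn_pos (j m : ℕ) (h : j ≠ 0) : stepFn j m = (2*j+1) * 2^m := by simp [stepFn, h]

lemma le_stepFn (j m : ℕ) : m - 1 ≤ stepFn j m := by
  unfold stepFn
  split_ifs with h
  · exact le_refl _
  · calc m - 1 ≤ m := Nat.sub_le _ _
      _ ≤ 2^m := (Nat.lt_two_pow_self (n := m)).le
      _ ≤ (2*j+1) * 2^m := Nat.le_mul_of_pos_left _ (by positivity)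

lemma L1 (w : List ℕ) (n : ℕ) : n - w.length ≤ evalW w n := by
  induction w with
  | nil => simp
  | cons j t ih =>
      have : n - (j :: t).length = (n - t.length) - 1 := by
        simp [Nat.sub_sub]
      rw [this]
      exact le_trans (Nat.sub_le_sub_right ih 1) (le_stepFn _ _)

lemma L3 (w : List ℕ) (h : ∀ j ∈ w, j = 0) (n : ℕ) : evalW w n = n - w.length := by
  induction w with
  | nil => simp
  | cons j t ih =>
      have hj : j = 0 := h j (by simp)
      have ht : ∀ j ∈ t, j = 0 := fun x hx => h x (by simp [hx])
      rw [evalW_cons, ih ht, hj, stepFn_zero]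
      simp [Nat.sub_sub]

lemma two_mul_le_two_pow (m : ℕ) (h : 1 ≤ m) : 2*m ≤ 2^m := by
  obtain ⟨s, rfl⟩ := Nat.exists_eq_add_of_le h
  have h1 : s < 2^s := Nat.lt_two_pow_self (n := s)
  have h2 : (2:ℕ)^(1+s) = 2 * 2^s := by rw [pow_add, pow_one]
  omega

lemma two_pow_sub_big (c a n : ℕ) (h : 2*c + 2*a + 2 ≤ n) : n + a < 2^(n - c) := by
  set m := n - c with hm
  have hn : n = m + c := by omega
  have h1 : 2*m ≤ 2^m := two_mul_le_two_pow m (by omega)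
  omega

lemma L2 (w : List ℕ) (n : ℕ) (h : ∃ j ∈ w, j ≠ 0) (hn : w.length ≤ n) :
    2^(n - w.length) ≤ evalW w n := by
  induction w with
  | nil => simp at h
  | cons j t ih =>
      have hn' : t.length + 1 ≤ n := by simpa using hn
      rcases eq_or_ne j 0 with rfl | hj
      · have ht : ∃ x ∈ t, x ≠ 0 := by
          rcases h with ⟨x, hx, hx0⟩
          rcases List.mem_cons.mp hx with rfl | hxt
          · exact absurd rfl hx0
          · exact ⟨x, hxt, hx0⟩
        have hih := ih ht (by omega)
        rw [evalW_cons, stepFn_zero]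
        simp only [List.length_cons]
        have hx : n - t.length = (n - (t.length + 1)) + 1 := by omega
        rw [hx, pow_succ] at hih
        have hp : 1 ≤ 2^(n - (t.length + 1)) := Nat.one_le_two_pow
        omega
      · rw [evalW_cons, stepFn_pos _ _ hj]
        calc (2:ℕ)^(n - (j :: t).length) ≤ 2^(n - t.length) := by
              apply Nat.pow_le_pow_right (by norm_num)
              simp only [List.length_cons]; omega
          _ ≤ 2^(evalW t n) := Nat.pow_le_pow_right (by norm_num) (L1 t n)
          _ ≤ (2*j+1) * 2^(evalW t n) := Nat.le_mul_of_pos_left _ (by positivity)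

lemma K0 {j j' x y : ℕ} (h : (2*j+1)*2^x = (2*j'+1)*2^y) : j = j' ∧ x = y := by
  wlog hxy : x ≤ y generalizing j j' x y
  · have := this h.symm (by omega)
    exact ⟨this.1.symm, this.2.symm⟩
  obtain ⟨e, rfl⟩ := Nat.exists_eq_add_of_le hxy
  rw [pow_add, mul_comm ((2:ℕ)^x) ((2:ℕ)^e), ← mul_assoc] at h
  have h3 : 2*j+1 = (2*j'+1) * 2^e := Nat.eq_of_mul_eq_mul_right (by positivity) h
  rcases Nat.eq_zero_or_pos e with he | he
  · subst he; simp at h3; omega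
  · exfalso
    have h4 : 2 ∣ (2*j'+1) * 2^e := Dvd.dvd.mul_left (dvd_pow_self 2 (by omega)) _
    have h5 : 2 ∣ 2*j+1 := h3 ▸ h4
    omega


lemma claimC (j' : ℕ) (hj' : j' ≠ 0) (u' : List ℕ) (u : List ℕ) :
    ∀ a, 1 ≤ a → ∀ᶠ n in atTop, evalW u n ≠ (2*j'+1) * 2^(evalW u' n) + a := by
  induction u with
  | nil =>
      intro a ha
      filter_upwards [eventually_ge_atTop (2*u'.length + 2)] with n hn
      have h1 : n + 0 < 2^(n - u'.length) := two_pow_sub_big u'.length 0 n (by omega)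
      have h2 : (2:ℕ)^(n - u'.length) ≤ 2^(evalW u' n) :=
        Nat.pow_le_pow_right (by norm_num) (L1 u' n)
      have h3 : (2:ℕ)^(evalW u' n) ≤ (2*j'+1) * 2^(evalW u' n) :=
        Nat.le_mul_of_pos_left _ (by positivity)
      simp only [evalW_nil]
      omega
  | cons j t ih =>
      intro a ha
      rcases eq_or_ne j 0 with rfl | hj
      · filter_upwards [ih (a+1) (by omega), eventually_ge_atTop (t.length + 1)] with n h1 h2
        have h3 : 1 ≤ evalW t n := by
          have := L1 t n; omega
        rw [evalW_cons, stepFn_zero]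
        intro heq
        exact h1 (by omega)
      · set M := max t.length u'.length with hM
        filter_upwards [eventually_ge_atTop (2*M + 2*a + 2)] with n hn
        rw [evalW_cons, stepFn_pos _ _ hj]
        intro heq
        set x := evalW t n with hx
        set y := evalW u' n with hy
        have d1 : (2:ℕ)^(min x y) ∣ (2*j+1)*2^x :=
          Dvd.dvd.mul_left (pow_dvd_pow 2 (min_le_left _ _)) _
        have d2 : (2:ℕ)^(min x y) ∣ (2*j'+1)*2^y :=
          Dvd.dvd.mul_left (pow_dvd_pow 2 (min_le_right _ _)) _
        have ha' : a = (2*j+1)*2^x - (2*j'+1)*2^y := by omega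
        have d3 : (2:ℕ)^(min x y) ∣ a := by
          rw [ha']; exact Nat.dvd_sub d1 d2
        have hle : (2:ℕ)^(min x y) ≤ a := Nat.le_of_dvd (by omega) d3
        have hxn : n - M ≤ x := le_trans (by have := L1 t n; omega) (le_refl x) |>.trans (le_refl _) |>.trans (le_refl _)
        have hxn' : n - M ≤ x := by have := L1 t n; omega
        have hyn : n - M ≤ y := by have := L1 u' n; omega
        have hmin : (2:ℕ)^(n - M) ≤ 2^(min x y) :=
          Nat.pow_le_pow_right (by norm_num) (by omega)
        have hbig : n + a < 2^(n - M) := two_pow_sub_big M a n (by omega)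
        omega

lemma evalNeSucc (u : List ℕ) : ∀ᶠ n in atTop, evalW u n ≠ n + 1 := by
  by_cases hall : ∀ j ∈ u, j = 0
  · exact Eventually.of_forall fun n => by rw [L3 u hall n]; omega
  · push_neg at hall
    filter_upwards [eventually_ge_atTop (2*u.length + 2*1 + 2)] with n hn
    have h1 := L2 u n hall (by omega)
    have h2 := two_pow_sub_big u.length 1 n (by omega)
    omega

lemma evalNeId (w : List ℕ) (hw : w ≠ []) : ∀ᶠ n in atTop, evalW w n ≠ n := by
  cases w with
  | nil => exact absurd rfl hw
  | cons j t =>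
      rcases eq_or_ne j 0 with rfl | hj
      · filter_upwards [evalNeSucc t, eventually_ge_atTop (t.length + 1)] with n h1 h2
        rw [evalW_cons, stepFn_zero]
        have h3 : 1 ≤ evalW t n := by have := L1 t n; omega
        intro heq
        exact h1 (by omega)
      · filter_upwards [eventually_ge_atTop (2*t.length + 2)] with n hn
        rw [evalW_cons, stepFn_pos _ _ hj]
        have h1 : n + 0 < 2^(n - t.length) := two_pow_sub_big t.length 0 n (by omega)
        have h2 : (2:ℕ)^(n - t.length) ≤ 2^(evalW t n) :=
          Nat.pow_le_pow_right (by norm_num) (L1 t n)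
        have h3 : (2:ℕ)^(evalW t n) ≤ (2*j+1) * 2^(evalW t n) :=
          Nat.le_mul_of_pos_left _ (by positivity)
        omega

lemma claimB (w : List ℕ) : ∀ w', w ≠ w' → ∀ᶠ n in atTop, evalW w n ≠ evalW w' n := by
  induction w with
  | nil =>
      intro w' hw'
      exact (evalNeId w' (Ne.symm hw')).mono fun n h => by simpa using fun hh => h hh.symm
  | cons j t ih =>
      intro w' hw'
      cases w' with
      | nil => exact (evalNeId (j :: t) hw').mono fun n h => by simpa using h
      | cons j' t' =>
          rcases eq_or_ne j 0 with rfl | hj <;> rcases eq_or_ne j' 0 with rfl | hj'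
          · -- both zero
            have ht : t ≠ t' := fun h => hw' (by rw [h])
            filter_upwards [ih t' ht, eventually_ge_atTop (max t.length t'.length + 1)] with n h1 h2
            rw [evalW_cons, evalW_cons, stepFn_zero, stepFn_zero]
            have l1 := L1 t n
            have l2 := L1 t' n
            intro heq
            exact h1 (by omega)
          · -- w starts with 0, w' with j' ≠ 0
            filter_upwards [claimC j' hj' t' t 1 (by omega), eventually_ge_atTop (t.length + 1)] with n h1 h2
            rw [evalW_cons, evalW_cons, stepFn_zero, stepFn_pos _ _ hj']
            have l1 := L1 t n
            intro heq
            exact h1 (by omega)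
          · -- symmetric
            filter_upwards [claimC j hj t t' 1 (by omega), eventually_ge_atTop (t'.length + 1)] with n h1 h2
            rw [evalW_cons, evalW_cons, stepFn_zero, stepFn_pos _ _ hj]
            have l1 := L1 t' n
            intro heq
            exact h1 (by omega)
          · -- both nonzero
            rcases eq_or_ne t t' with rfl | ht
            · have hjj : j ≠ j' := fun h => hw' (by rw [h])
              refine Eventually.of_forall fun n => ?_
              rw [evalW_cons, evalW_cons, stepFn_pos _ _ hj, stepFn_pos _ _ hj']
              intro heq
              exact hjj (K0 heq).1
            · filter_upwards [ih t' ht] with n h1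
              rw [evalW_cons, evalW_cons, stepFn_pos _ _ hj, stepFn_pos _ _ hj']
              intro heq
              exact h1 (K0 heq).2


variable (k : Type) [Field k]

/-- the endomorphism of `ℕ →₀ k` by which letter `j` acts -/
noncomputable def opEnd (j : ℕ) : Module.End k (ℕ →₀ k) :=
  Finsupp.lsum k fun n =>
    if j = 0 ∧ n = 0 then (0 : k →ₗ[k] (ℕ →₀ k)) else Finsupp.lsingle (stepFn j n)

lemma opEnd_single (j n : ℕ) (c : k) :
    opEnd k j (Finsupp.single n c) =
      if j = 0 ∧ n = 0 then 0 else Finsupp.single (stepFn j n) c := by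
  rw [opEnd, Finsupp.lsum_single]
  split_ifs with h
  · simp
  · simp [Finsupp.lsingle_apply]

lemma opEnd_single_ne (j n : ℕ) (c : k) (h : ¬(j = 0 ∧ n = 0)) :
    opEnd k j (Finsupp.single n c) = Finsupp.single (stepFn j n) c := by
  rw [opEnd_single, if_neg h]

lemma opEnd_zero_zero (c : k) : opEnd k 0 (Finsupp.single 0 c) = 0 := by
  rw [opEnd_single, if_pos ⟨rfl, rfl⟩]

lemma opEnd_zero_succ (n : ℕ) (c : k) :
    opEnd k 0 (Finsupp.single (n+1) c) = Finsupp.single n c := by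
  rw [opEnd_single_ne _ _ _ _ (by simp), stepFn_zero]
  simp

lemma opEnd_pos_single (j n : ℕ) (hj : j ≠ 0) (c : k) :
    opEnd k j (Finsupp.single n c) = Finsupp.single ((2*j+1) * 2^n) c := by
  rw [opEnd_single_ne _ _ _ _ (by simp [hj]), stepFn_pos _ _ hj]

/-- the operator of a word -/
noncomputable def Tw (w : List ℕ) : Module.End k (ℕ →₀ k) := (w.map (opEnd k)).prod

@[simp] lemma Tw_nil : Tw k [] = 1 := rfl

lemma Tw_cons (j : ℕ) (t : List ℕ) : Tw k (j :: t) = opEnd k j * Tw k t := by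
  simp [Tw]

lemma Tw_single (w : List ℕ) (n : ℕ) (h : w.length + 1 ≤ n) :
    Tw k w (Finsupp.single n 1) = Finsupp.single (evalW w n) 1 := by
  induction w with
  | nil => simp [Tw]
  | cons j t ih =>
      have ht : t.length + 1 ≤ n := by simp at h; omega
      rw [Tw_cons, Module.End.mul_apply, ih ht, evalW_cons]
      have h1 : 1 ≤ evalW t n := by
        have := L1 t n; simp at h; omega
      exact opEnd_single_ne _ _ _ _ (by omega)

lemma opEnd_zero_pow (r i : ℕ) (c : k) :
    ((opEnd k 0)^r) (Finsupp.single i c) =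
      if r ≤ i then Finsupp.single (i - r) c else 0 := by
  induction r generalizing i with
  | zero => simp
  | succ r ih =>
      rw [pow_succ, Module.End.mul_apply]
      cases i with
      | zero => rw [opEnd_zero_zero]; simp
      | succ m =>
          rw [opEnd_zero_succ, ih]
          have : (r + 1 ≤ m + 1) = (r ≤ m) := by simp
          split_ifs with h1 h2 h2 <;> first
            | (congr 1; omega)
            | rfl
            | omega

variable (d : ℕ)

/-- the representation -/
noncomputable def phiA : FreeAlgebra k (Fin d) →ₐ[k] Module.End k (ℕ →₀ k) :=
  FreeAlgebra.lift k fun j => opEnd k j.val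

lemma basis_eq_lift (w : FreeMonoid (Fin d)) :
    FreeAlgebra.basisFreeMonoid k (Fin d) w = FreeMonoid.lift (FreeAlgebra.ι k) w := by
  have h2 : FreeAlgebra.basisFreeMonoid k (Fin d) w
      = (FreeAlgebra.equivMonoidAlgebraFreeMonoid (R := k) (X := Fin d)).symm
          (MonoidAlgebra.single w 1) := by
    rw [FreeAlgebra.basisFreeMonoid, Module.Basis.map_apply]; rfl
  rw [h2, FreeAlgebra.equivMonoidAlgebraFreeMonoid, AlgEquiv.ofAlgHom_symm_apply]
  exact (MonoidAlgebra.lift_single _ _ _).trans (one_smul _ _)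

lemma phiA_lift (w : FreeMonoid (Fin d)) :
    phiA k d (FreeMonoid.lift (FreeAlgebra.ι k) w) = Tw k (w.toList.map Fin.val) := by
  induction w using FreeMonoid.recOn with
  | one => simp [Tw]
  | of_mul x xs ih =>
      rw [map_mul, map_mul, FreeMonoid.lift_eval_of, FreeMonoid.toList_of_mul]
      rw [List.map_cons, Tw_cons, ih]
      congr 1
      rw [phiA, FreeAlgebra.lift_ι_apply]

lemma phiA_monomial (w : FreeMonoid (Fin d)) :
    phiA k d (FreeAlgebra.basisFreeMonoid k (Fin d) w) = Tw k (w.toList.map Fin.val) := by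
  rw [basis_eq_lift, phiA_lift]


/-- encoding of monomials as words -/
def code (w : FreeMonoid (Fin d)) : List ℕ := w.toList.map Fin.val

lemma code_injective : Function.Injective (code d) := by
  intro a b h
  have := List.map_injective_iff.mpr (Fin.val_injective) h
  exact FreeMonoid.toList.injective this

theorem phiA_injective : Function.Injective (phiA k d) := by
  rw [injective_iff_map_eq_zero]
  intro z hz
  by_contra hz0
  set b := FreeAlgebra.basisFreeMonoid k (Fin d) with hbdef
  set c := b.repr z with hc
  have hcne : c ≠ 0 := fun h => hz0 (by
    have := b.linearCombination_repr z
    rw [← hc] at this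
    rw [h] at this
    simpa using this.symm)
  obtain ⟨w₀, hw₀⟩ := Finsupp.support_nonempty_iff.mpr hcne
  -- z as a sum over the basis
  have hsum : (∑ w ∈ c.support, c w • b w) = z := by
    have := b.linearCombination_repr z
    rw [← hc] at this
    rw [← this]
    rw [Finsupp.linearCombination_apply, Finsupp.sum]
  have h0 : (∑ w ∈ c.support, c w • Tw k (code d w)) = 0 := by
    have := congrArg (phiA k d) hsum
    rw [map_sum] at this
    rw [hz] at this
    rw [← this]
    apply Finset.sum_congr rfl
    intro w hw
    rw [map_smul, phiA_monomial]
    rfl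
  -- choose a good evaluation point
  have hev1 : ∀ᶠ n in atTop, ∀ w ∈ c.support, ∀ w' ∈ c.support,
      w ≠ w' → evalW (code d w) n ≠ evalW (code d w') n := by
    rw [Finset.eventually_all]
    intro w hw
    rw [Finset.eventually_all]
    intro w' hw'
    rcases eq_or_ne w w' with rfl | hne
    · exact Eventually.of_forall fun n h => absurd rfl h
    · exact (claimB _ _ fun h => hne (code_injective d h)).mono fun n h _ => h
  have hev2 : ∀ᶠ n in atTop, ∀ w ∈ c.support, (code d w).length + 1 ≤ n := by
    rw [Finset.eventually_all]
    intro w _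
    exact eventually_ge_atTop _
  obtain ⟨n, hn1, hn2⟩ := (hev1.and hev2).exists
  -- evaluate at `single n 1`
  have h1 : (∑ w ∈ c.support, c w • Finsupp.single (evalW (code d w) n) (1:k)) = 0 := by
    have := congrArg (fun (T : Module.End k (ℕ →₀ k)) => T (Finsupp.single n 1)) h0
    simp only [LinearMap.sum_apply, LinearMap.smul_apply, LinearMap.zero_apply] at this
    rw [← this]
    apply Finset.sum_congr rfl
    intro w hw
    rw [Tw_single _ _ _ (hn2 w hw)]
  -- evaluate the Finsupp at the coordinate of w₀
  have h2 := congrArg (fun f : ℕ →₀ k => f (evalW (code d w₀) n)) h1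
  simp only [Finsupp.finset_sum_apply, Finsupp.smul_apply, Finsupp.single_apply,
    Finsupp.coe_zero, Pi.zero_apply] at h2
  rw [Finset.sum_eq_single_of_mem w₀ hw₀] at h2
  · simp at h2
    exact (Finsupp.mem_support_iff.mp hw₀) h2
  · intro w hw hne
    rw [if_neg (hn1 w hw w₀ hw₀ hne)]
    simp


noncomputable def theModule : Module (FreeAlgebra k (Fin d)) (ℕ →₀ k) :=
  Module.compHom _ (phiA k d).toRingHom

theorem theSmul (r : FreeAlgebra k (Fin d)) (x : ℕ →₀ k) :
    letI := theModule k d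
    r • x = phiA k d r x := rfl

theorem theFaithful :
    letI := theModule k d
    FaithfulSMul (FreeAlgebra k (Fin d)) (ℕ →₀ k) := by
  letI := theModule k d
  constructor
  intro r s h
  exact phiA_injective k d (LinearMap.ext fun x => h x)

theorem theSimple (hd : 2 ≤ d) :
    letI := theModule k d
    IsSimpleModule (FreeAlgebra k (Fin d)) (ℕ →₀ k) := by
  letI := theModule k d
  have hgen : ∀ (i : Fin d) (x : ℕ →₀ k), (FreeAlgebra.ι k i) • x = opEnd k i.val x := by
    intro i x
    rw [theSmul, phiA, FreeAlgebra.lift_ι_apply]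
  have halg : ∀ (a : k) (x : ℕ →₀ k),
      (algebraMap k (FreeAlgebra k (Fin d)) a) • x = a • x := by
    intro a x
    rw [theSmul, AlgHom.commutes]
    simp [Module.algebraMap_end_apply]
  rw [isSimpleModule_iff]; constructor
  intro N
  by_cases hN : N = ⊥
  · exact Or.inl hN
  right
  obtain ⟨v, hvN, hv0⟩ := (Submodule.ne_bot_iff N).mp hN
  -- closure facts
  have hop : ∀ (j : Fin d) (x : ℕ →₀ k), x ∈ N → opEnd k j.val x ∈ N := by
    intro j x hx
    rw [← hgen]
    exact N.smul_mem _ hx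
  have hscal : ∀ (a : k) (x : ℕ →₀ k), x ∈ N → a • x ∈ N := by
    intro a x hx
    rw [← halg]
    exact N.smul_mem _ hx
  have hop0 : ∀ (x : ℕ →₀ k), x ∈ N → opEnd k 0 x ∈ N := by
    intro x hx
    have := hop ⟨0, by omega⟩ x hx
    exact this
  have hop0pow : ∀ (r : ℕ) (x : ℕ →₀ k), x ∈ N → ((opEnd k 0)^r) x ∈ N := by
    intro r
    induction r with
    | zero => intro x hx; simpa using hx
    | succ r ih =>
        intro x hx
        rw [pow_succ, Module.End.mul_apply]
        exact ih _ (hop0 x hx)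
  have hop1 : ∀ (x : ℕ →₀ k), x ∈ N → opEnd k 1 x ∈ N := by
    intro x hx
    have := hop ⟨1, by omega⟩ x hx
    exact this
  -- step 1 : single 0 1 ∈ N
  have hsupp : v.support.Nonempty := Finsupp.support_nonempty_iff.mpr hv0
  set M := v.support.max' hsupp with hM
  have hMmem : M ∈ v.support := v.support.max'_mem hsupp
  have hMne : v M ≠ 0 := Finsupp.mem_support_iff.mp hMmem
  have hcollapse : ((opEnd k 0)^M) v = Finsupp.single 0 (v M) := by
    conv_lhs => rw [← Finsupp.sum_single v]
    rw [Finsupp.sum, map_sum]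
    rw [Finset.sum_eq_single_of_mem M hMmem]
    · rw [opEnd_zero_pow, if_pos le_rfl, Nat.sub_self]
    · intro i hi hne
      have hile : i ≤ M := v.support.le_max' i hi
      rw [opEnd_zero_pow, if_neg (by omega)]
  have hs0 : Finsupp.single 0 (v M) ∈ N := by
    rw [← hcollapse]; exact hop0pow M v hvN
  have hone : Finsupp.single 0 (1:k) ∈ N := by
    have := hscal (v M)⁻¹ _ hs0
    rwa [Finsupp.smul_single', inv_mul_cancel₀ hMne] at this
  -- step 2 : all singles
  have hup : ∀ p : ℕ, Finsupp.single p (1:k) ∈ N →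
      Finsupp.single ((2*1+1) * 2^p) (1:k) ∈ N := by
    intro p hp
    have := hop1 _ hp
    rwa [opEnd_pos_single k 1 p (by omega)] at this
  have hdown : ∀ p : ℕ, Finsupp.single (p+1) (1:k) ∈ N → Finsupp.single p (1:k) ∈ N := by
    intro p hp
    have := hop0 _ hp
    rwa [opEnd_zero_succ] at this
  have hdowns : ∀ (e p : ℕ), Finsupp.single (p+e) (1:k) ∈ N → Finsupp.single p (1:k) ∈ N := by
    intro e
    induction e with
    | zero => intro p hp; simpa using hp
    | succ e ih =>
        intro p hp
        have : p + (e+1) = (p+1) + e := by omega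
        rw [this] at hp
        exact hdown p (ih (p+1) hp)
  have hbig : ∀ m : ℕ, ∃ q, m ≤ q ∧ Finsupp.single q (1:k) ∈ N := by
    intro m
    induction m with
    | zero => exact ⟨0, le_rfl, hone⟩
    | succ m ih =>
        obtain ⟨q, hq, hqN⟩ := ih
        refine ⟨(2*1+1) * 2^q, ?_, hup q hqN⟩
        have := Nat.lt_two_pow_self (n := q)
        have : 2^q ≤ (2*1+1) * 2^q := Nat.le_mul_of_pos_left _ (by omega)
        have := Nat.lt_two_pow_self (n := q)
        omega
  have hall : ∀ m : ℕ, Finsupp.single m (1:k) ∈ N := by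
    intro m
    obtain ⟨q, hq, hqN⟩ := hbig m
    obtain ⟨e, rfl⟩ := Nat.exists_eq_add_of_le hq
    exact hdowns e m hqN
  -- step 3 : N = ⊤
  rw [Submodule.eq_top_iff']
  intro x
  have : x = ∑ i ∈ x.support, Finsupp.single i (x i) := by
    conv_lhs => rw [← Finsupp.sum_single x]
    rfl
  rw [this]
  apply Submodule.sum_mem
  intro i _
  have : Finsupp.single i (x i) = (x i) • Finsupp.single i (1:k) := by
    rw [Finsupp.smul_single', mul_one]
  rw [this]
  exact hscal _ _ (hall i)


end FreeAlgPrim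

/-- For every d ≥ 2, the free associative algebra on d generators over a field
is left primitive. -/
theorem freeAlgebra_d_gens_left_primitive (k : Type) [Field k] (d : ℕ) (hd : 2 ≤ d) :
    IsLeftPrimitiveRing (FreeAlgebra k (Fin d)) := by
  exact ⟨ℕ →₀ k, inferInstance, FreeAlgPrim.theModule k d,
    FreeAlgPrim.theSimple k d hd, FreeAlgPrim.theFaithful k d⟩
end

section
/- A ring R with unit is left primitive if and only if R has a proper left ideal I such that I + P = R for every nonzero prime (two-sided) ideal P of R. -/
/-- A two-sided ideal P is prime if P ≠ R and for two-sided ideals a, b,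
ab ⊆ P implies a ⊆ P or b ⊆ P. -/
def TwoSidedIdeal.IsPrimeIdeal {R : Type*} [Ring R] (P : TwoSidedIdeal R) : Prop :=
  P ≠ ⊤ ∧ ∀ a b : TwoSidedIdeal R,
    (∀ x ∈ a, ∀ y ∈ b, x * y ∈ P) → (∀ x ∈ a, x ∈ P) ∨ (∀ y ∈ b, y ∈ P)

/-- A ring with unit is left primitive iff it has a proper left ideal I such that
I + P = R for every nonzero prime two-sided ideal P. -/
theorem isLeftPrimitiveRing_iff_exists_left_ideal_comaximal_with_primes
    (R : Type*) [Ring R] :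
    IsLeftPrimitiveRing R ↔
      ∃ I : Submodule R R, I ≠ ⊤ ∧
        ∀ P : TwoSidedIdeal R, P.IsPrimeIdeal → P ≠ ⊥ →
          ∀ r : R, ∃ a ∈ I, ∃ p ∈ P, r = a + p := by
  constructor
  · rintro ⟨M, _, _, hsimp, hfaith⟩
    haveI := IsSimpleModule.nontrivial R M
    obtain ⟨m, hm⟩ := exists_ne (0 : M)
    set φ : R →ₗ[R] M := LinearMap.toSpanSingleton R M m with hφ
    have hrange : LinearMap.range φ = ⊤ := by
      have : Submodule.span R {m} ≠ ⊥ := by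
        simp [Submodule.span_singleton_eq_bot, hm]
      have := (eq_bot_or_eq_top (Submodule.span R ({m} : Set M))).resolve_left this
      rw [LinearMap.span_singleton_eq_range] at this
      exact this
    have hsurj : Function.Surjective φ := LinearMap.range_eq_top.mp hrange
    set I := LinearMap.ker φ with hI
    have hIcoatom : IsCoatom I := by
      rw [← isSimpleModule_iff_isCoatom]
      exact IsSimpleModule.congr (φ.quotKerEquivOfSurjective hsurj)
    refine ⟨I, hIcoatom.1, fun P hP hPbot r => ?_⟩
    -- show P ⊄ I
    have hPI : ¬ (∀ p ∈ P, p ∈ I) := by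
      intro hsub
      obtain ⟨p, hpP, hp0⟩ : ∃ p ∈ P, p ≠ 0 := by
        by_contra hc
        push_neg at hc
        apply hPbot
        ext x
        rw [TwoSidedIdeal.mem_bot]
        exact ⟨fun h => hc x h, fun h => h ▸ P.zero_mem⟩
      apply hp0
      apply hfaith.eq_of_smul_eq_smul (m₂ := (0 : R))
      intro x
      obtain ⟨s, rfl⟩ := hsurj x
      have : p * s ∈ I := hsub _ (P.mul_mem_right _ _ hpP)
      have hps : (p * s) • m = 0 := this
      simp only [zero_smul]
      calc p • φ s = (p * s) • m := by
            simp [hφ, LinearMap.toSpanSingleton_apply, mul_smul]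
        _ = 0 := hps
    push_neg at hPI
    obtain ⟨q, hqP, hqI⟩ := hPI
    have hsup : I ⊔ P.asIdeal = ⊤ := by
      apply hIcoatom.2
      refine lt_of_le_of_ne le_sup_left fun hc => ?_
      have hq : q ∈ I ⊔ P.asIdeal :=
        Submodule.mem_sup_right (TwoSidedIdeal.mem_asIdeal.mpr hqP)
      rw [← hc] at hq
      exact hqI hq
    have : r ∈ I ⊔ P.asIdeal := hsup ▸ Submodule.mem_top
    obtain ⟨a, ha, p, hp, rfl⟩ := Submodule.mem_sup.mp this
    exact ⟨a, ha, p, TwoSidedIdeal.mem_asIdeal.mp hp, rfl⟩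
  · rintro ⟨I, hI, h⟩
    obtain ⟨J, hJmax, hIJ⟩ := Ideal.exists_le_maximal I hI
    have hJcoatom : IsCoatom J := hJmax.out
    haveI hsimp : IsSimpleModule R (R ⧸ J) := isSimpleModule_iff_isCoatom.mpr hJcoatom
    refine ⟨R ⧸ J, inferInstance, inferInstance, hsimp, ⟨fun {r s} hrs => ?_⟩⟩
    by_contra hne
    set A : TwoSidedIdeal R := TwoSidedIdeal.mk'
      {t : R | ∀ x : R ⧸ J, t • x = 0}
      (fun x => by simp)
      (fun {a b} ha hb x => by rw [add_smul, ha, hb, add_zero])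
      (fun {a} ha x => by rw [neg_smul, ha, neg_zero])
      (fun {a b} hb x => by rw [mul_smul, hb, smul_zero])
      (fun {a b} ha x => by rw [mul_smul, ha]) with hA
    have memA : ∀ t : R, t ∈ A ↔ ∀ x : R ⧸ J, t • x = 0 := fun t =>
      TwoSidedIdeal.mem_mk' _ _ _ _ _ _ t
    have hrsA : r - s ∈ A := by
      rw [memA]
      intro x
      rw [sub_smul, hrs, sub_self]
    have hAJ : ∀ t ∈ A, t ∈ J := by
      intro t ht
      have := (memA t).mp ht (Submodule.Quotient.mk 1)
      rw [← Submodule.Quotient.mk_smul, smul_eq_mul, mul_one] at this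
      exact (Submodule.Quotient.mk_eq_zero J).mp this
    have hAne : A ≠ ⊥ := by
      intro hc
      rw [hc] at hrsA
      exact hne (sub_eq_zero.mp ((TwoSidedIdeal.mem_bot R).mp hrsA))
    have hAtop : A ≠ ⊤ := by
      intro hc
      have h1 : (1 : R) ∈ A := by rw [hc]; exact TwoSidedIdeal.mem_top R
      have := (memA 1).mp h1 (Submodule.Quotient.mk 1)
      rw [one_smul] at this
      exact hJcoatom.1 ((Ideal.eq_top_iff_one J).mpr
        ((Submodule.Quotient.mk_eq_zero J).mp this))
    have hAprime : A.IsPrimeIdeal := by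
      refine ⟨hAtop, fun a b hab => ?_⟩
      by_cases hb : ∀ y ∈ b, y ∈ A
      · exact Or.inr hb
      · push_neg at hb
        obtain ⟨y, hyb, hyA⟩ := hb
        rw [memA] at hyA
        push_neg at hyA
        obtain ⟨x0, hx0⟩ := hyA
        left
        intro x hxa
        rw [memA]
        -- the submodule generated by b • (R⧸J) is ⊤
        set N : Submodule R (R ⧸ J) := Submodule.span R
          {z : R ⧸ J | ∃ p ∈ b, ∃ w : R ⧸ J, z = p • w} with hN
        have hNtop : N = ⊤ := by
          rcases eq_bot_or_eq_top N with hc | hc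
          · exfalso
            apply hx0
            have : y • x0 ∈ N := Submodule.subset_span ⟨y, hyb, x0, rfl⟩
            rw [hc] at this
            simpa using this
          · exact hc
        intro w
        have hw : w ∈ N := hNtop ▸ Submodule.mem_top
        set K : Submodule R (R ⧸ J) :=
          { carrier := {w : R ⧸ J | ∀ x ∈ a, x • w = 0}
            add_mem' := fun {u v} hu hv x hx => by
              rw [smul_add, hu x hx, hv x hx, add_zero]
            zero_mem' := fun x _ => smul_zero x
            smul_mem' := fun c w hw x hx => by
              rw [← mul_smul]
              exact hw (x * c) (a.mul_mem_right _ _ hx) } with hK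
        have hNK : N ≤ K := by
          rw [hN, Submodule.span_le]
          rintro z ⟨p, hpb, v, rfl⟩
          intro x' hx'
          rw [← mul_smul]
          exact (memA _).mp (hab x' hx' p hpb) v
        exact hNK hw x hxa
    obtain ⟨a, haI, p, hpA, hone⟩ := h A hAprime hAne (1 : R)
    apply hJcoatom.1
    rw [Ideal.eq_top_iff_one J, hone]
    exact J.add_mem (hIJ haI) (hAJ p hpA)
end

section
/- Let A = ℂ[x]/(x³) and let B be the subalgebra of A generated by the image of x². Then A is nearly free as a left B-module (witnessed by the set E = {1, x̄} where x̄ is the image of x), but A is not free as a left B-module. -/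
set_option synthInstance.maxHeartbeats 1000000
set_option maxHeartbeats 1000000
open Polynomial

noncomputable section
namespace CxCubed

abbrev I3 : Ideal (Polynomial ℂ) := Ideal.span {(X : Polynomial ℂ) ^ 3}
abbrev A' := Polynomial ℂ ⧸ I3
def xb : A' := Ideal.Quotient.mk _ (X : Polynomial ℂ)

lemma smul_mk (c : ℂ) (p : Polynomial ℂ) :
    c • (Ideal.Quotient.mk I3 p) = Ideal.Quotient.mk I3 (C c * p) := by
  rw [← smul_eq_C_mul]
  exact (Submodule.Quotient.mk_smul I3 c p).symm

lemma smul_one_mk (c : ℂ) : c • (1 : A') = Ideal.Quotient.mk I3 (C c) := by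
  have := smul_mk c 1
  rwa [mul_one] at this

lemma xb_pow3 : xb ^ 3 = 0 := by
  rw [xb, ← map_pow, Ideal.Quotient.eq_zero_iff_mem]
  exact Ideal.subset_span rfl

lemma hind (c0 c1 c2 : ℂ) (h : c0 • (1:A') + c1 • xb + c2 • xb ^ 2 = 0) :
    c0 = 0 ∧ c1 = 0 ∧ c2 = 0 := by
  have hp : (Ideal.Quotient.mk I3) (C c2 * X ^ 2 + C c1 * X + C c0) = 0 := by
    rw [map_add, map_add, ← smul_mk, ← smul_mk, ← smul_one_mk, map_pow]
    show c2 • xb ^ 2 + c1 • xb + c0 • (1:A') = 0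
    rw [← h]; abel
  rw [Ideal.Quotient.eq_zero_iff_mem, Ideal.mem_span_singleton] at hp
  have hz : C c2 * X ^ 2 + C c1 * X + C c0 = 0 := by
    apply Polynomial.eq_zero_of_dvd_of_degree_lt hp
    calc (C c2 * X ^ 2 + C c1 * X + C c0).degree
        ≤ 2 := Polynomial.degree_quadratic_le
      _ < (X ^ 3 : Polynomial ℂ).degree := by rw [degree_X_pow]; norm_num
  refine ⟨?_, ?_, ?_⟩
  · have := congrArg (fun p => Polynomial.coeff p 0) hz
    simpa [coeff_X_pow] using this
  · have := congrArg (fun p => Polynomial.coeff p 1) hz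
    simpa [coeff_X_pow] using this
  · have := congrArg (fun p => Polynomial.coeff p 2) hz
    simpa [coeff_X_pow] using this

lemma hrep (a : A') : ∃ c0 c1 c2 : ℂ, a = c0 • (1:A') + c1 • xb + c2 • xb ^ 2 := by
  obtain ⟨P, rfl⟩ := Ideal.Quotient.mk_surjective a
  set q := P %ₘ (X ^ 3) with hq
  have hmk : Ideal.Quotient.mk I3 P = Ideal.Quotient.mk I3 q := by
    rw [Ideal.Quotient.eq, Ideal.mem_span_singleton]
    have h := Polynomial.modByMonic_add_div P (X ^ 3 : Polynomial ℂ)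
    exact ⟨P /ₘ X ^ 3, by linear_combination -h⟩
  have hdeg : q.natDegree < 3 := by
    have hne : (X ^ 3 : Polynomial ℂ) ≠ 1 := fun h => by
      simpa using congrArg natDegree h
    have := Polynomial.natDegree_modByMonic_lt P (monic_X_pow (n := 3) (R := ℂ)) hne
    simpa using this
  refine ⟨q.coeff 0, q.coeff 1, q.coeff 2, ?_⟩
  have hqeq : q = C (q.coeff 2) * X ^ 2 + C (q.coeff 1) * X + C (q.coeff 0) := by
    ext i
    rcases i with _ | _ | _ | i
    · simp [coeff_X_pow]
    · simp [coeff_X_pow]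
    · simp [coeff_X_pow]
    · rw [Polynomial.coeff_eq_zero_of_natDegree_lt (by omega)]
      simp [coeff_X_pow]
  rw [hmk]
  conv_lhs => rw [hqeq]
  rw [map_add, map_add, ← smul_mk, ← smul_mk, ← smul_one_mk, map_pow]
  show q.coeff 2 • xb ^ 2 + q.coeff 1 • xb + q.coeff 0 • (1:A') = _
  abel

end CxCubed
end

noncomputable section
namespace CxCubed
open CxCubed

lemma hsq : (xb ^ 2) * (xb ^ 2) = 0 := by
  have h := xb_pow3
  calc (xb^2) * (xb^2) = xb^3 * xb := by ring
  _ = 0 := by rw [h, zero_mul]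

lemma one_ne_zero' : (1 : A') ≠ 0 := by
  intro h
  have : (1:ℂ) • (1:A') + (0:ℂ) • xb + (0:ℂ) • xb ^ 2 = 0 := by simp [h]
  exact one_ne_zero (hind 1 0 0 this).1

lemma one_ne_xb : (1 : A') ≠ xb := by
  intro h
  have : (1:ℂ) • (1:A') + (-1:ℂ) • xb + (0:ℂ) • xb ^ 2 = 0 := by
    simp [← h]
  exact one_ne_zero (hind 1 (-1) 0 this).1

abbrev Bsub : Subalgebra ℂ A' := Algebra.adjoin ℂ {xb ^ 2}

lemma algebraMap_eq_smul_one' (r : ℂ) : algebraMap ℂ A' r = r • (1:A') := by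
  rw [smul_one_mk]; rfl

lemma mem_B_iff (b : A') : b ∈ Bsub ↔ ∃ d0 d2 : ℂ, b = d0 • (1:A') + d2 • xb ^ 2 := by
  constructor
  · intro hb
    induction hb using Algebra.adjoin_induction with
    | mem x hx => exact ⟨0, 1, by simp at hx; simp [hx]⟩
    | algebraMap r => exact ⟨r, 0, by simp [algebraMap_eq_smul_one']⟩
    | add x y hx hy ihx ihy =>
      obtain ⟨d0, d2, rfl⟩ := ihx; obtain ⟨e0, e2, rfl⟩ := ihy
      exact ⟨d0 + e0, d2 + e2, by rw [add_smul, add_smul]; abel⟩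
    | mul x y hx hy ihx ihy =>
      obtain ⟨d0, d2, rfl⟩ := ihx; obtain ⟨e0, e2, rfl⟩ := ihy
      refine ⟨d0 * e0, d0 * e2 + d2 * e0, ?_⟩
      rw [mul_add, add_mul, add_mul, smul_mul_smul_comm, smul_mul_smul_comm,
        smul_mul_smul_comm, smul_mul_smul_comm, hsq]
      simp only [one_mul, mul_one, smul_zero, add_zero, add_smul]
      abel
  · rintro ⟨d0, d2, rfl⟩
    exact add_mem (SMulMemClass.smul_mem _ (one_mem _))
      (SMulMemClass.smul_mem _ (Algebra.self_mem_adjoin_singleton ℂ _))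

def vA : Fin 3 → A' := ![1, xb, xb ^ 2]

lemma liA : LinearIndependent ℂ vA := by
  rw [Fintype.linearIndependent_iff]
  intro g hg
  rw [Fin.sum_univ_three] at hg
  simp only [vA, Matrix.cons_val_zero, Matrix.cons_val_one, Matrix.head_cons,
    Matrix.cons_val_two, Matrix.tail_cons] at hg
  obtain ⟨h0, h1, h2⟩ := hind _ _ _ hg
  intro i; fin_cases i <;> assumption

lemma spanA : ⊤ ≤ Submodule.span ℂ (Set.range vA) := by
  intro a _
  obtain ⟨c0, c1, c2, rfl⟩ := hrep a
  refine add_mem (add_mem ?_ ?_) ?_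
  · exact Submodule.smul_mem _ _ (Submodule.subset_span ⟨0, by simp [vA]⟩)
  · exact Submodule.smul_mem _ _ (Submodule.subset_span ⟨1, by simp [vA]⟩)
  · exact Submodule.smul_mem _ _ (Submodule.subset_span ⟨2, by simp [vA]⟩)

def basisA : Module.Basis (Fin 3) ℂ A' := Module.Basis.mk liA spanA

lemma rankA : Module.rank ℂ A' = 3 := by
  rw [← basisA.mk_eq_rank'']; simp

instance : Nontrivial A' := ⟨1, 0, one_ne_zero'⟩

instance : Nontrivial ↥Bsub := ⟨0, 1, fun h => one_ne_zero' (by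
  have := congrArg Subtype.val h; simpa using this.symm)⟩

def vB : Fin 2 → ↥Bsub := ![1, ⟨xb ^ 2, Algebra.self_mem_adjoin_singleton ℂ _⟩]

lemma liB : LinearIndependent ℂ vB := by
  rw [Fintype.linearIndependent_iff]
  intro g hg
  rw [Fin.sum_univ_two] at hg
  have hval := congrArg Subtype.val hg
  simp only [vB, Matrix.cons_val_zero, Matrix.cons_val_one, Matrix.head_cons] at hval
  push_cast at hval
  have : g 0 • (1:A') + (0:ℂ) • xb + g 1 • xb ^ 2 = 0 := by
    rw [zero_smul, add_zero]; exact_mod_cast hval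
  obtain ⟨h0, _, h2⟩ := hind _ _ _ this
  intro i; fin_cases i <;> assumption

lemma spanB : ⊤ ≤ Submodule.span ℂ (Set.range vB) := by
  rintro ⟨b, hb⟩ _
  obtain ⟨d0, d2, hbe⟩ := (mem_B_iff b).mp hb
  have : (⟨b, hb⟩ : ↥Bsub) = d0 • vB 0 + d2 • vB 1 := by
    apply Subtype.ext
    simpa [vB] using hbe
  rw [this]
  exact add_mem (Submodule.smul_mem _ _ (Submodule.subset_span ⟨_, rfl⟩))
    (Submodule.smul_mem _ _ (Submodule.subset_span ⟨_, rfl⟩))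

def basisB : Module.Basis (Fin 2) ℂ ↥Bsub := Module.Basis.mk liB spanB

lemma rankB : Module.rank ℂ ↥Bsub = 2 := by
  rw [← basisB.mk_eq_rank'']; simp

lemma not_free : ¬ Module.Free ↥Bsub A' := by
  intro hfree
  have hmul := rank_mul_rank ℂ ↥Bsub A'
  rw [rankA, rankB] at hmul
  set r := Module.rank ↥Bsub A' with hr
  have h3 : ((3:ℕ) : Cardinal) = 2 * r := by exact_mod_cast hmul.symm
  have hlt : r < Cardinal.aleph0 := by
    refine lt_of_le_of_lt (Cardinal.le_mul_left (a := r) (b := 2) (by norm_num)) ?_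
    rw [← h3]; exact Cardinal.nat_lt_aleph0 3
  obtain ⟨n, hn⟩ := Cardinal.lt_aleph0.mp hlt
  rw [hn] at h3
  have : (3:ℕ) = 2 * n := by exact_mod_cast h3
  omega

end CxCubed
end

namespace CxCubed

lemma xb_sq_mul_xb : xb ^ 2 * xb = 0 := by
  rw [← pow_succ]; exact xb_pow3

lemma key (b c : A') (hb : b ∈ Bsub) (hc : c ∈ Bsub) (heq : b * 1 + c * xb = 0) :
    b = 0 ∧ c * xb = 0 := by
  obtain ⟨d0, d2, rfl⟩ := (mem_B_iff b).mp hb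
  obtain ⟨e0, e2, rfl⟩ := (mem_B_iff c).mp hc
  have hexp : (d0 • (1:A') + d2 • xb ^ 2) * 1 + (e0 • (1:A') + e2 • xb ^ 2) * xb
      = d0 • (1:A') + e0 • xb + d2 • xb ^ 2 := by
    rw [mul_one, add_mul, smul_mul_assoc, smul_mul_assoc, one_mul, xb_sq_mul_xb,
      smul_zero, add_zero]
    abel
  rw [hexp] at heq
  obtain ⟨h0, h1, h2⟩ := hind _ _ _ heq
  constructor
  · rw [h0, h2, zero_smul, zero_smul, add_zero]
  · rw [add_mul, smul_mul_assoc, one_mul, smul_mul_assoc, xb_sq_mul_xb, smul_zero,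
      add_zero, h1, zero_smul]

end CxCubed

open CxCubed in
open Polynomial in
/-- Let A = ℂ[x]/(x³) and B the subalgebra generated by the image of x².  Then A is
nearly free as a left B-module, witnessed by E = {1, x̄}, but A is not free as a
left B-module. -/
theorem cx_mod_x_cubed_nearly_free_not_free :
    let A := Polynomial ℂ ⧸ Ideal.span {(X : Polynomial ℂ) ^ 3}
    let xbar : A := Ideal.Quotient.mk _ (X : Polynomial ℂ)
    let B : Subalgebra ℂ A := Algebra.adjoin ℂ {xbar ^ 2}
    let E : Set A := {1, xbar}
    -- A is nearly free as a left B-module, witnessed by E: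
    ((1 : A) ∈ E ∧
      (∀ a : A, ∃ (s : Finset A) (f : A → A), ↑s ⊆ E ∧ (∀ x ∈ s, f x ∈ B) ∧
        a = ∑ x ∈ s, f x * x) ∧
      (∀ (s : Finset A) (f : A → A), ↑s ⊆ E → (∀ x ∈ s, f x ∈ B) →
        ∑ x ∈ s, f x * x = 0 → ∀ x ∈ s, f x * x = 0)) ∧
    -- but A is not free as a left B-module:
    ¬ Module.Free ↥B A := by
  classical
  intro A xbar B E
  refine ⟨⟨?_, ?_, ?_⟩, ?_⟩
  · exact Set.mem_insert _ _
  · -- spanning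
    intro a
    obtain ⟨c0, c1, c2, rfl⟩ := hrep a
    refine ⟨{1, xb}, fun t => if t = 1 then c0 • (1:A') + c2 • xb ^ 2 else c1 • (1:A'),
      ?_, ?_, ?_⟩
    · intro y hy
      show y ∈ ({1, xb} : Set A')
      simpa using hy
    · intro x _
      show _ ∈ Bsub
      dsimp only
      by_cases h : x = 1
      · rw [if_pos h]; exact (mem_B_iff _).mpr ⟨c0, c2, rfl⟩
      · rw [if_neg h]; exact (mem_B_iff _).mpr ⟨c1, 0, by rw [zero_smul, add_zero]⟩
    · dsimp only
      rw [Finset.sum_pair one_ne_xb, if_pos rfl, if_neg (Ne.symm one_ne_xb), mul_one,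
        smul_mul_assoc, one_mul]
      abel
  · -- independence
    intro s f hsE hfB hsum x hx
    have hsub : s ⊆ ({1, xb} : Finset A') := by
      intro y hy
      have h2 : y ∈ ({1, xb} : Set A') := hsE hy
      simpa using h2
    set g : A' → A' := fun y => if y ∈ s then f y else 0 with hgdef
    have e1 : ∑ y ∈ s, g y * y = ∑ y ∈ s, f y * y :=
      Finset.sum_congr rfl (fun y hy => by simp [hgdef, hy])
    have hg : ∑ y ∈ ({1, xb} : Finset A'), g y * y = 0 := by
      rw [← Finset.sum_subset hsub (fun y _ hys => by simp [hgdef, hys])]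
      rw [e1]; exact hsum
    rw [Finset.sum_pair one_ne_xb] at hg
    have hgB1 : g 1 ∈ Bsub := by
      by_cases h1 : (1:A') ∈ s
      · have hm : f _ ∈ Bsub := hfB _ h1
        simpa [hgdef, h1] using hm
      · simp [hgdef, h1]
    have hgBx : g xb ∈ Bsub := by
      by_cases h1 : xb ∈ s
      · have hm : f _ ∈ Bsub := hfB _ h1
        simpa [hgdef, h1] using hm
      · simp [hgdef, h1]
    obtain ⟨k1, k2⟩ := key (g 1) (g xb) hgB1 hgBx hg
    have hx' : x = 1 ∨ x = xb := by simpa using hsub hx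
    rcases hx' with rfl | rfl
    · have hgf : g 1 = f 1 := by simp [hgdef, hx]
      rw [mul_one]
      rw [hgf] at k1
      exact k1
    · have hgf : g xb = f xb := by simp [hgdef, hx]
      rw [hgf] at k2
      exact k2
  · exact not_free
end

section
/- Let A be a prime ring and B a right primitive subring of A such that (1) A is nearly free as a left B-module and (2) every nonzero two-sided ideal I of A satisfies I ∩ B ≠ 0. Then A is right primitive. -/
open MulOpposite

/-- A ring is right primitive if it admits a faithful simple right module. -/
def IsRightPrimitiveRing.{u} (R : Type u) [Ring R] : Prop :=
  ∃ (M : Type u) (_ : AddCommGroup M) (_ : Module Rᵐᵒᵖ M),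
    IsSimpleModule Rᵐᵒᵖ M ∧ FaithfulSMul Rᵐᵒᵖ M

/-- A is nearly free as a left B-module, witnessed by a set E. -/
def IsNearlyFree {A : Type*} [Ring A] (B : Subring A) (E : Set A) : Prop :=
  (1 : A) ∈ E ∧
  (∀ a : A, ∃ (s : Finset A) (f : A → A), ↑s ⊆ E ∧ (∀ x ∈ s, f x ∈ B) ∧
    a = ∑ x ∈ s, f x * x) ∧
  (∀ (s : Finset A) (f : A → A), ↑s ⊆ E → (∀ x ∈ s, f x ∈ B) →
    ∑ x ∈ s, f x * x = 0 → ∀ x ∈ s, f x * x = 0)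

/-- From a right primitive ring we extract a maximal right ideal (as a left ideal
of the opposite ring) containing no nonzero two-sided ideal; we only record the
elementwise consequence needed later. -/
lemma exists_coatom_of_rightPrimitive (B : Type*) [Ring B] (h : IsRightPrimitiveRing B) :
    ∃ ρ : Ideal Bᵐᵒᵖ, IsCoatom ρ ∧ ∀ c : B, (∀ x : B, op (x * c) ∈ ρ) → c = 0 := by
  obtain ⟨M, _, _, hsimp, hfaith⟩ := h
  haveI := IsSimpleModule.nontrivial Bᵐᵒᵖ M
  obtain ⟨m, hm⟩ := exists_ne (0 : M)
  refine ⟨LinearMap.ker (LinearMap.toSpanSingleton Bᵐᵒᵖ M m), ?_, ?_⟩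
  · exact Ideal.isMaximal_def.mp (IsSimpleModule.ker_toSpanSingleton_isMaximal Bᵐᵒᵖ hm)
  · intro c hc
    have hz : ∀ u : M, (op c) • u = (0 : Bᵐᵒᵖ) • u := by
      intro u
      obtain ⟨r, rfl⟩ := IsSimpleModule.toSpanSingleton_surjective Bᵐᵒᵖ hm u
      have h1 : op c • (LinearMap.toSpanSingleton Bᵐᵒᵖ M m r) = (op c * r) • m := by
        rw [LinearMap.toSpanSingleton_apply, smul_smul]
      have h2 : op c * r = op (unop r * c) := by
        rw [op_mul, op_unop]
      have h3 : (op (unop r * c)) • m = 0 := by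
        have := hc (unop r)
        rwa [LinearMap.mem_ker, LinearMap.toSpanSingleton_apply] at this
      rw [h1, h2, h3, zero_smul]
    have : op c = (0 : Bᵐᵒᵖ) := hfaith.eq_of_smul_eq_smul hz
    simpa using this

/-- If A is a prime ring and B is a right primitive subring such that A is nearly
free as a left B-module and every nonzero two-sided ideal of A meets B nontrivially,
then A is right primitive. -/
theorem rightPrimitive_of_nearlyFree_subring
    (A : Type*) [Ring A] (B : Subring A) (E : Set A)
    (hprime : ∀ I J : TwoSidedIdeal A, I ≠ ⊥ → J ≠ ⊥ → ∃ x ∈ I, ∃ y ∈ J, x * y ≠ 0)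
    (hBprim : IsRightPrimitiveRing ↥B)
    (hNF : IsNearlyFree B E)
    (hmeet : ∀ I : TwoSidedIdeal A, I ≠ ⊥ → ∃ x ∈ I, x ∈ B ∧ x ≠ 0) :
    IsRightPrimitiveRing A := by
  classical
  obtain ⟨ρ, hρco, hρP⟩ := exists_coatom_of_rightPrimitive ↥B hBprim
  -- ρ'' : the set of elements of A coming from ρ
  set ρ'' : Set A := {a : A | ∃ b : ↥B, op b ∈ ρ ∧ a = ↑b} with hρ''def
  have hρ''0 : (0 : A) ∈ ρ'' := ⟨0, by simpa using ρ.zero_mem, by simp⟩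
  have hρ''add : ∀ a ∈ ρ'', ∀ b ∈ ρ'', a + b ∈ ρ'' := by
    rintro _ ⟨b1, hb1, rfl⟩ _ ⟨b2, hb2, rfl⟩
    exact ⟨b1 + b2, by simpa [op_add] using ρ.add_mem hb1 hb2, by push_cast; ring⟩
  have hρ''B : ∀ a ∈ ρ'', a ∈ B := by rintro _ ⟨b, hb, rfl⟩; exact b.2
  have hρ''mul : ∀ a ∈ ρ'', ∀ b : ↥B, a * (b : A) ∈ ρ'' := by
    rintro _ ⟨b1, hb1, rfl⟩ b
    exact ⟨b1 * b, by simpa [op_mul] using ρ.mul_mem_left (op b) hb1, by push_cast; ring⟩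
  -- the additive submonoid W of A consisting of ρ-combinations of elements of E
  set Wc : Set A := {a : A | ∃ (s : Finset A) (f : A → A), ↑s ⊆ E ∧
      (∀ x ∈ s, f x ∈ ρ'') ∧ a = ∑ x ∈ s, f x * x} with hWdef
  have hW0 : (0 : A) ∈ Wc := ⟨∅, fun _ => 0, by simp, by simp, by simp⟩
  have hWadd : ∀ a ∈ Wc, ∀ b ∈ Wc, a + b ∈ Wc := by
    rintro _ ⟨s1, f1, hs1, hf1, rfl⟩ _ ⟨s2, f2, hs2, hf2, rfl⟩
    refine ⟨s1 ∪ s2, fun x => (if x ∈ s1 then f1 x else 0) + (if x ∈ s2 then f2 x else 0),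
      ?_, ?_, ?_⟩
    · rw [Finset.coe_union]; exact Set.union_subset hs1 hs2
    · intro x hx
      refine hρ''add _ ?_ _ ?_
      · split
        · exact hf1 x ‹_›
        · exact hρ''0
      · split
        · exact hf2 x ‹_›
        · exact hρ''0
    · have e1 : ∑ x ∈ s1 ∪ s2, (if x ∈ s1 then f1 x else 0) * x = ∑ x ∈ s1, f1 x * x := by
        rw [← Finset.sum_subset Finset.subset_union_left
          (fun x _ hx => by simp [hx])]
        exact Finset.sum_congr rfl fun x hx => by simp [hx]
      have e2 : ∑ x ∈ s1 ∪ s2, (if x ∈ s2 then f2 x else 0) * x = ∑ x ∈ s2, f2 x * x := by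
        rw [← Finset.sum_subset Finset.subset_union_right
          (fun x _ hx => by simp [hx])]
        exact Finset.sum_congr rfl fun x hx => by simp [hx]
      simp only [add_mul, Finset.sum_add_distrib, e1, e2]
  have hWsum : ∀ (s : Finset A) (g : A → A), (∀ x ∈ s, g x ∈ Wc) → (∑ x ∈ s, g x) ∈ Wc := by
    intro s
    induction s using Finset.induction_on with
    | empty => intro g _; simpa using hW0
    | @insert x s hx ih =>
      intro g hg
      rw [Finset.sum_insert hx]
      exact hWadd _ (hg _ (Finset.mem_insert_self _ _)) _
        (ih g fun y hy => hg y (Finset.mem_insert_of_mem hy))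
  -- W absorbs right multiplication
  have hWr : ∀ r ∈ ρ'', ∀ c : A, r * c ∈ Wc := by
    intro r hr c
    obtain ⟨t, g, htE, hgB, rfl⟩ := hNF.2.1 c
    refine ⟨t, fun y => r * g y, htE, ?_, ?_⟩
    · intro y hy; exact hρ''mul r hr ⟨g y, hgB y hy⟩
    · rw [Finset.mul_sum]; exact Finset.sum_congr rfl fun y _ => (mul_assoc r (g y) y).symm
  have hWmul : ∀ a ∈ Wc, ∀ c : A, a * c ∈ Wc := by
    rintro _ ⟨s, f, hsE, hf, rfl⟩ c
    rw [Finset.sum_mul]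
    refine hWsum _ _ fun x hx => ?_
    rw [mul_assoc]
    exact hWr (f x) (hf x hx) (x * c)
  -- the key lemma : W ∩ B lies in ρ
  have hkey : ∀ b : ↥B, (↑b : A) ∈ Wc → op b ∈ ρ := by
    rintro b ⟨s, f, hsE, hf, hsum⟩
    set f' : A → A := fun x => (if x ∈ s then f x else 0) - (if x = 1 then (b : A) else 0)
      with hf'def
    have hs'E : ↑(insert (1 : A) s) ⊆ E := by
      rw [Finset.coe_insert]
      exact Set.insert_subset hNF.1 hsE
    have hf'B : ∀ x ∈ insert (1 : A) s, f' x ∈ B := by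
      intro x hx
      refine sub_mem ?_ ?_ <;> split
      · exact hρ''B _ (hf x (by assumption))
      · exact zero_mem _
      · exact b.2
      · exact zero_mem _
    have hzero : ∑ x ∈ insert (1 : A) s, f' x * x = 0 := by
      simp only [hf'def, sub_mul, Finset.sum_sub_distrib]
      have e1 : ∑ x ∈ insert (1 : A) s, (if x ∈ s then f x else 0) * x
          = ∑ x ∈ s, f x * x := by
        rw [← Finset.sum_subset (Finset.subset_insert _ _)
          (fun x _ hx => by simp [hx])]
        exact Finset.sum_congr rfl fun x hx => by simp [hx]
      have e2 : ∑ x ∈ insert (1 : A) s, (if x = (1 : A) then (b : A) else 0) * x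
          = (b : A) := by
        rw [Finset.sum_eq_single_of_mem (1 : A) (Finset.mem_insert_self _ _)
          (fun x _ hx => by simp [hx])]
        simp
      rw [e1, e2, ← hsum, sub_self]
    have h1 := hNF.2.2 (insert (1 : A) s) f' hs'E hf'B hzero 1 (Finset.mem_insert_self _ _)
    rw [mul_one] at h1
    have hb : (if (1 : A) ∈ s then f 1 else 0) = (b : A) := by
      have h2 : ((if (1 : A) ∈ s then f 1 else 0) - if (1 : A) = 1 then (b : A) else 0) = 0 := h1
      rw [if_pos rfl] at h2
      exact sub_eq_zero.mp h2
    by_cases h1s : (1 : A) ∈ s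
    · rw [if_pos h1s] at hb
      obtain ⟨b', hb', he⟩ := hf 1 h1s
      have : b = b' := Subtype.ext (hb ▸ he)
      rwa [this]
    · rw [if_neg h1s] at hb
      have : b = 0 := Subtype.ext hb.symm
      rw [this]
      simpa using ρ.zero_mem
  -- the left ideal T of Aᵐᵒᵖ corresponding to W
  obtain ⟨T, hTmem⟩ : ∃ T : Ideal Aᵐᵒᵖ, ∀ a : Aᵐᵒᵖ, a ∈ T ↔ unop a ∈ Wc := by
    refine ⟨⟨⟨⟨{a : Aᵐᵒᵖ | unop a ∈ Wc}, ?_⟩, ?_⟩, ?_⟩, fun a => Iff.rfl⟩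
    · intro a b ha hb
      show unop (a + b) ∈ Wc
      rw [unop_add]; exact hWadd _ ha _ hb
    · show unop (0 : Aᵐᵒᵖ) ∈ Wc
      simpa using hW0
    · intro c a ha
      show unop (c • a) ∈ Wc
      rw [smul_eq_mul, unop_mul]
      exact hWmul _ ha _
  have hTne : T ≠ ⊤ := by
    intro h
    have h1 : (1 : Aᵐᵒᵖ) ∈ T := h ▸ Submodule.mem_top
    have : ((1 : ↥B) : A) ∈ Wc := by simpa using (hTmem 1).mp h1
    have := hkey 1 this
    exact hρco.1 ((Ideal.eq_top_iff_one ρ).mpr (by simpa using this))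
  obtain ⟨𝔪, h𝔪max, hT𝔪⟩ := Ideal.exists_le_maximal T hTne
  -- membership of ρ-elements in 𝔪
  have hρ𝔪 : ∀ b : ↥B, op b ∈ ρ → op (b : A) ∈ 𝔪 := by
    intro b hb
    refine hT𝔪 ((hTmem _).mpr ?_)
    rw [unop_op]
    exact ⟨{1}, fun _ => (b : A), by simpa using hNF.1,
      fun x _ => ⟨b, hb, rfl⟩, by simp⟩
  -- 𝔪 ∩ B = ρ
  have hB𝔪 : ∀ b : ↥B, op (b : A) ∈ 𝔪 → op b ∈ ρ := by
    have hρ₂ : ∃ ρ₂ : Ideal (↥B)ᵐᵒᵖ, ∀ r : (↥B)ᵐᵒᵖ, r ∈ ρ₂ ↔ op ((unop r : ↥B) : A) ∈ 𝔪 := by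
      refine ⟨⟨⟨⟨{r : (↥B)ᵐᵒᵖ | op ((unop r : ↥B) : A) ∈ 𝔪}, ?_⟩, ?_⟩, ?_⟩, fun r => Iff.rfl⟩
      · intro a b ha hb
        show op (((unop (a + b) : ↥B)) : A) ∈ 𝔪
        have he : (((unop (a + b) : ↥B)) : A) = ((unop a : ↥B) : A) + ((unop b : ↥B) : A) := by
          rw [unop_add]; push_cast; ring
        rw [he, op_add]; exact 𝔪.add_mem ha hb
      · show op (((unop (0 : (↥B)ᵐᵒᵖ) : ↥B)) : A) ∈ 𝔪
        simpa using 𝔪.zero_mem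
      · intro c r hr
        show op (((unop (c • r) : ↥B)) : A) ∈ 𝔪
        have he : (((unop (c • r) : ↥B)) : A) = ((unop r : ↥B) : A) * ((unop c : ↥B) : A) := by
          rw [smul_eq_mul, unop_mul]; push_cast; ring
        rw [he, op_mul]
        exact 𝔪.mul_mem_left _ hr
    obtain ⟨ρ₂, hρ₂mem⟩ := hρ₂
    have hle : ρ ≤ ρ₂ := by
      intro r hr
      rw [hρ₂mem]
      exact hρ𝔪 (unop r) (by simpa using hr)
    have hρ₂ne : ρ₂ ≠ ⊤ := by
      intro h
      have : (1 : (↥B)ᵐᵒᵖ) ∈ ρ₂ := h ▸ Submodule.mem_top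
      rw [hρ₂mem] at this
      simp only [unop_one, OneMemClass.coe_one] at this
      exact h𝔪max.ne_top ((Ideal.eq_top_iff_one 𝔪).mpr (by simpa using this))
    have heq : ρ = ρ₂ := by
      rcases hle.lt_or_eq with h | h
      · exact absurd (hρco.2 ρ₂ h) hρ₂ne
      · exact h
    intro b hb
    rw [heq, hρ₂mem]
    simpa using hb
  -- the quotient module
  refine ⟨Aᵐᵒᵖ ⧸ 𝔪, inferInstance, inferInstance, ?_, ?_⟩
  · exact isSimpleModule_iff_isCoatom.mpr (Ideal.isMaximal_def.mp h𝔪max)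
  · refine ⟨fun {c c'} hcc => ?_⟩
    by_contra hne
    have hd0 : c - c' ≠ 0 := sub_ne_zero.mpr hne
    set d : Aᵐᵒᵖ := c - c' with hddef
    have hd : ∀ x : A, op (x * unop d) ∈ 𝔪 := by
      intro x
      have h1 : d • (Submodule.Quotient.mk (op x) : Aᵐᵒᵖ ⧸ 𝔪) = 0 := by
        have := hcc (Submodule.Quotient.mk (op x))
        rw [hddef, sub_smul, this, sub_self]
      rw [← Submodule.Quotient.mk_smul, Submodule.Quotient.mk_eq_zero] at h1
      have : d • (op x) = op (x * unop d) := by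
        rw [op_mul, op_unop, smul_eq_mul]
      rwa [this] at h1
    -- the two-sided ideal of elements annihilating the quotient
    set I : TwoSidedIdeal A := TwoSidedIdeal.mk' {a : A | ∀ x : A, op (x * a) ∈ 𝔪}
      (by intro x; simpa using 𝔪.zero_mem)
      (fun {a b} ha hb x => by rw [mul_add, op_add]; exact 𝔪.add_mem (ha x) (hb x))
      (fun {a} ha x => by rw [mul_neg, op_neg]; exact 𝔪.neg_mem (ha x))
      (fun {a b} hb x => by rw [← mul_assoc]; exact hb (x * a))
      (fun {a b} ha x => by
        have : op (x * (a * b)) = op b * op (x * a) := by rw [← op_mul, mul_assoc]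
        rw [this]; exact 𝔪.mul_mem_left _ (ha x)) with hIdef
    have hImem : ∀ a : A, a ∈ I ↔ ∀ x : A, op (x * a) ∈ 𝔪 := by
      intro a; rw [hIdef, TwoSidedIdeal.mem_mk']; rfl
    have hIne : I ≠ ⊥ := by
      intro h
      have : unop d ∈ I := (hImem _).mpr hd
      rw [h, TwoSidedIdeal.mem_bot] at this
      exact hd0 (by simpa using congrArg op this)
    obtain ⟨cA, hcI, hcB, hc0⟩ := hmeet I hIne
    set cB : ↥B := ⟨cA, hcB⟩ with hcBdef
    have : cB = 0 := by
      apply hρP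
      intro x
      apply hB𝔪
      have hmul : ((x * cB : ↥B) : A) ∈ I := by
        push_cast
        exact I.mul_mem_left _ _ hcI
      have := (hImem _).mp hmul 1
      rwa [one_mul] at this
    exact hc0 (by simpa [hcBdef] using congrArg Subtype.val this)
end

section
/- Let A be a prime ring, B a subring, I a maximal right ideal of B containing no nonzero two-sided ideal of B, and suppose A is nearly free as a left B-module via a set E containing 1. Then IA = Σ_{x∈E} Ix is a proper right ideal of A. -/
section Aux

variable {A : Type*} [Ring A] (B : Subring A) (E : Set A)
    (I : Submodule (↥B)ᵐᵒᵖ ↥B)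

/-- The representability predicate. -/
def NFRep (a : A) : Prop :=
  ∃ (s : Finset A) (f : A → ↥B), ↑s ⊆ E ∧ (∀ x ∈ s, f x ∈ I) ∧
    a = ∑ x ∈ s, (f x : A) * x

variable {B E I}

lemma nfrep_zero : NFRep B E I 0 :=
  ⟨∅, fun _ => 0, by simp, by simp, by simp⟩

lemma nfrep_add {a b : A} (ha : NFRep B E I a) (hb : NFRep B E I b) :
    NFRep B E I (a + b) := by
  classical
  obtain ⟨s₁, f₁, hs₁, hf₁, rfl⟩ := ha
  obtain ⟨s₂, f₂, hs₂, hf₂, rfl⟩ := hb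
  refine ⟨s₁ ∪ s₂,
    fun x => (if x ∈ s₁ then f₁ x else 0) + (if x ∈ s₂ then f₂ x else 0), ?_, ?_, ?_⟩
  · push_cast
    exact Set.union_subset hs₁ hs₂
  · intro x _
    apply I.add_mem <;> (split <;> simp_all [I.zero_mem])
  · push_cast
    simp only [add_mul, Finset.sum_add_distrib,
      apply_ite (fun b : ↥B => (b : A)), ZeroMemClass.coe_zero, ite_mul, zero_mul,
      Finset.sum_ite_mem, Finset.union_inter_cancel_left, Finset.union_inter_cancel_right]

lemma nfrep_sum {ι : Type*} (s : Finset ι) (F : ι → A)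
    (h : ∀ i ∈ s, NFRep B E I (F i)) : NFRep B E I (∑ i ∈ s, F i) := by
  classical
  induction s using Finset.induction with
  | empty => simpa using nfrep_zero
  | insert _ _ hx ih =>
    rw [Finset.sum_insert hx]
    exact nfrep_add (h _ (Finset.mem_insert_self _ _))
      (ih fun i hi => h i (Finset.mem_insert_of_mem hi))

lemma nfrep_term {b : ↥B} (hb : b ∈ I) {x : A} (hx : x ∈ E) :
    NFRep B E I ((b : A) * x) :=
  ⟨{x}, fun _ => b, by simpa using hx, fun _ _ => hb, by simp⟩

lemma nfrep_mul_left (hNF : IsNearlyFree B E) {b : ↥B} (hb : b ∈ I) (a : A) :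
    NFRep B E I ((b : A) * a) := by
  obtain ⟨s, g, hsE, hgB, rfl⟩ := hNF.2.1 a
  rw [Finset.mul_sum]
  refine nfrep_sum s _ fun x hx => ?_
  have : (b : A) * (g x * x) = ((b * ⟨g x, hgB x hx⟩ : ↥B) : A) * x := by
    push_cast; rw [mul_assoc]
  rw [this]
  exact nfrep_term (I.smul_mem (MulOpposite.op (⟨g x, hgB x hx⟩ : ↥B)) hb) (hsE hx)

lemma nfrep_smul (hNF : IsNearlyFree B E) {a : A} (c : Aᵐᵒᵖ)
    (ha : NFRep B E I a) : NFRep B E I (c • a) := by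
  obtain ⟨s, f, hsE, hfI, rfl⟩ := ha
  have : c • (∑ x ∈ s, (f x : A) * x) = ∑ x ∈ s, (f x : A) * (x * c.unop) := by
    rw [MulOpposite.smul_eq_mul_unop, Finset.sum_mul]
    simp [mul_assoc]
  rw [this]
  exact nfrep_sum s _ fun x hx => nfrep_mul_left hNF (hfI x hx) _

end Aux

/-- If A is prime, B a subring, I a maximal right ideal of B containing no nonzero
two-sided ideal of B, and A is nearly free as a left B-module via E ∋ 1, then
IA = Σ_{x ∈ E} Ix is a proper right ideal of A. -/
theorem IA_proper_right_ideal
    (A : Type*) [Ring A] (B : Subring A) (E : Set A)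
    (hprime : ∀ I J : TwoSidedIdeal A, I ≠ ⊥ → J ≠ ⊥ → ∃ x ∈ I, ∃ y ∈ J, x * y ≠ 0)
    (I : Submodule (↥B)ᵐᵒᵖ ↥B) (hImax : IsCoatom I)
    (hInoideal : ∀ J : TwoSidedIdeal ↥B, (∀ x ∈ J, x ∈ I) → J = ⊥)
    (hNF : IsNearlyFree B E) :
    (∀ a : A, a ∈ Submodule.span Aᵐᵒᵖ (Subtype.val '' (I : Set ↥B)) ↔
        ∃ (s : Finset A) (f : A → ↥B), ↑s ⊆ E ∧ (∀ x ∈ s, f x ∈ I) ∧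
          a = ∑ x ∈ s, (f x : A) * x) ∧
    Submodule.span Aᵐᵒᵖ (Subtype.val '' (I : Set ↥B)) ≠ ⊤ := by
  classical
  have hmain : ∀ a : A, a ∈ Submodule.span Aᵐᵒᵖ (Subtype.val '' (I : Set ↥B)) ↔
      NFRep B E I a := by
    intro a
    constructor
    · intro ha
      refine Submodule.span_induction (p := fun x _ => NFRep B E I x) ?_ nfrep_zero
        (fun x y _ _ hx hy => nfrep_add hx hy)
        (fun c x _ hx => nfrep_smul hNF c hx) ha
      intro x hx
      obtain ⟨b, hb, rfl⟩ := hx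
      simpa using nfrep_term hb hNF.1
    · rintro ⟨s, f, hsE, hfI, rfl⟩
      refine Submodule.sum_mem _ fun x hx => ?_
      have : (f x : A) * x = (MulOpposite.op x) • (f x : A) := rfl
      rw [this]
      exact Submodule.smul_mem _ _ (Submodule.subset_span ⟨f x, hfI x hx, rfl⟩)
  refine ⟨hmain, ?_⟩
  intro htop
  have h1 : NFRep B E I (1 : A) := (hmain 1).mp (htop ▸ Submodule.mem_top)
  obtain ⟨s, f, hsE, hfI, h1⟩ := h1
  set f0 : A → ↥B := fun x => if x ∈ s then f x else 0 with hf0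
  have hf0I : ∀ x, f0 x ∈ I := by
    intro x; simp only [hf0]; split
    · exact hfI _ ‹_›
    · exact I.zero_mem
  have h1' : (1 : A) = ∑ x ∈ insert 1 s, (f0 x : A) * x := by
    by_cases h1s : (1 : A) ∈ s
    · rw [Finset.insert_eq_self.mpr h1s, h1]
      exact Finset.sum_congr rfl fun x hx => by simp [hf0, hx]
    · rw [Finset.sum_insert h1s]
      simp only [hf0, if_neg h1s]
      rw [h1]
      simpa using Finset.sum_congr rfl fun x hx => by simp [hx]
  set g : A → A := fun x => if x = 1 then (f0 1 : A) - 1 else (f0 x : A) with hg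
  have hgB : ∀ x ∈ insert (1:A) s, g x ∈ B := by
    intro x _; simp only [hg]; split
    · exact B.sub_mem (f0 1).2 B.one_mem
    · exact (f0 x).2
  have hgsum : ∑ x ∈ insert (1:A) s, g x * x = 0 := by
    have : ∀ x : A, g x * x = (f0 x : A) * x - (if x = 1 then 1 else 0) := by
      intro x; simp only [hg]; split
      · subst ‹x = 1›; noncomm_ring
      · noncomm_ring
    simp only [this, Finset.sum_sub_distrib]
    rw [Finset.sum_ite_eq' (insert (1:A) s) 1 (fun _ => (1:A)),
      if_pos (Finset.mem_insert_self _ _), ← h1', sub_self]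
  have hrel := hNF.2.2 (insert 1 s) g
    (by push_cast; exact Set.insert_subset hNF.1 hsE) hgB hgsum 1
    (Finset.mem_insert_self _ _)
  have hf01 : (f0 1 : A) = 1 := by
    have : ((f0 1 : A) - 1) * 1 = 0 := by simpa [hg] using hrel
    rw [mul_one, sub_eq_zero] at this
    exact this
  have hone : (1 : ↥B) ∈ I := by
    have : f0 1 = (1 : ↥B) := Subtype.ext hf01
    exact this ▸ hf0I 1
  have : I = ⊤ := by
    rw [Submodule.eq_top_iff']
    intro b
    have := I.smul_mem (MulOpposite.op b) hone
    simpa using this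
  exact hImax.1 this
end

section
/- Let A be a monomial algebra over a field k, i.e., A = k⟨x₁,…,x_n⟩/I with I generated by monomials. Suppose there is a single word b such that every word with nonzero image in A is a subword (factor) of b^m for some m ≥ 0. Then the number of words of length n with nonzero image in A is at most the length of b (for n ≥ 1), and consequently A has Gelfand–Kirillov dimension at most 1. -/
lemma getElem_flatten_replicate {α : Type*} (b : List α) (m i : ℕ)
    (hi : i < ((List.replicate m b).flatten).length) (hb : 0 < b.length) :
    ((List.replicate m b).flatten)[i] = b[i % b.length]'(Nat.mod_lt _ hb) := by
  induction m generalizing i with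
  | zero => simp at hi
  | succ m ih =>
    have hrep : (List.replicate (m+1) b).flatten = b ++ (List.replicate m b).flatten := by
      rw [List.replicate_succ, List.flatten_cons]
    rw [List.getElem_of_eq hrep hi]
    have hi' : i < (b ++ (List.replicate m b).flatten).length := hrep ▸ hi
    rcases lt_or_ge i b.length with h | h
    · rw [List.getElem_append_left h]
      congr 1
      exact (Nat.mod_eq_of_lt h).symm
    · rw [List.getElem_append_right h, ih _ (by simp at hi' ⊢; omega)]
      congr 1
      exact (Nat.mod_eq_sub_mod h).symm

lemma getElem_of_infix_flatten {α : Type*} {b s u t : List α} {m : ℕ}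
    (heq : s ++ u ++ t = (List.replicate m b).flatten) {j : ℕ} (hj : j < u.length)
    (hb : 0 < b.length) :
    u[j] = b[(s.length + j) % b.length]'(Nat.mod_lt _ hb) := by
  have hlen : s.length + j < (s ++ u ++ t).length := by simp; omega
  have h1 : (s ++ u ++ t)[s.length + j] = u[j] := by
    rw [List.getElem_of_eq (List.append_assoc s u t) hlen,
      List.getElem_append_right (by omega : s.length ≤ s.length + j)]
    have : s.length + j - s.length = j := by omega
    simp only [this]
    exact List.getElem_append_left hj
  rw [← h1, List.getElem_of_eq heq hlen, getElem_flatten_replicate _ _ _ _ hb]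

/-- words of a fixed positive length that are factors of powers of `b` number
at most `b.length`. -/
lemma ncard_factors_le {α : Type*} (b : List α) (N : ℕ) (hN : 1 ≤ N)
    (S : Set (List α))
    (hS : ∀ u ∈ S, u.length = N ∧ ∃ m, u <:+: (List.replicate m b).flatten) :
    S.ncard ≤ b.length := by
  rcases Nat.eq_zero_or_pos b.length with hb | hb
  · have : S = ∅ := by
      ext u
      simp only [Set.mem_empty_iff_false, iff_false]
      intro hu
      obtain ⟨hlen, m, s, t, heq⟩ := hS u hu
      have h0 := congrArg List.length heq
      simp [hb] at h0
      obtain ⟨-, rfl, -⟩ := h0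
      simp at hlen
      omega
    simp [this, hb]
  · classical
    set L := b.length with hL
    have key : ∀ u ∈ S, ∃ i : ℕ, ∀ j (hj : j < u.length),
        u[j] = b[(i + j) % L]'(Nat.mod_lt _ hb) := by
      intro u hu
      obtain ⟨hlen, m, s, t, heq⟩ := hS u hu
      exact ⟨s.length, fun j hj => getElem_of_infix_flatten heq hj hb⟩
    choose f hf using key
    have := Set.ncard_le_ncard_of_injOn (s := S) (t := (Set.univ : Set (Fin L)))
      (fun u => if h : u ∈ S then (⟨f u h % L, Nat.mod_lt _ hb⟩ : Fin L) else ⟨0, hb⟩)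
      (fun a _ => Set.mem_univ _) ?_ Set.finite_univ
    · simpa [Set.ncard_univ] using this
    · intro u hu v hv huv
      simp only [dif_pos hu, dif_pos hv, Fin.mk.injEq] at huv
      have hvl : v.length = N := (hS v hv).1
      apply List.ext_getElem (by rw [(hS u hu).1, hvl])
      intro j h1 h2
      rw [hf u hu j h1, hf v hv j h2]
      congr 1
      rw [Nat.add_mod, huv, ← Nat.add_mod]

open Filter in
lemma limsup_le_one_aux (C : ℝ) (f : ℕ → ℝ) (h0 : ∀ N, 0 ≤ f N)
    (hf : ∀ N : ℕ, 2 ≤ N → f N ≤ 1 + C / Real.log N) :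
    Filter.limsup f Filter.atTop ≤ 1 := by
  have h1 : Tendsto (fun N : ℕ => Real.log N) atTop atTop :=
    Real.tendsto_log_atTop.comp tendsto_natCast_atTop_atTop
  have hg : Tendsto (fun N : ℕ => 1 + C / Real.log N) atTop (nhds 1) := by
    have h2 := Filter.Tendsto.div_atTop (tendsto_const_nhds (x := C)) h1
    simpa using (tendsto_const_nhds (x := (1:ℝ))).add h2
  have hb : IsBoundedUnder (· ≤ ·) atTop (fun N : ℕ => 1 + C / Real.log N) :=
    hg.isBoundedUnder_le
  have hcb : IsCoboundedUnder (· ≤ ·) atTop f :=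
    Filter.isCoboundedUnder_le_of_le atTop h0
  calc Filter.limsup f atTop ≤ Filter.limsup (fun N : ℕ => 1 + C / Real.log N) atTop :=
        Filter.limsup_le_limsup (Filter.eventually_atTop.mpr ⟨2, hf⟩) hcb hb
    _ = 1 := hg.limsup_eq

lemma finrank_span_le_of_subset_insert_zero {k V : Type*} [Field k] [AddCommGroup V]
    [Module k V] {s t : Set V} (hst : s ⊆ insert 0 t) (ht : t.Finite) :
    Module.finrank k (Submodule.span k s) ≤ t.ncard := by
  classical
  have h1 : Submodule.span k s ≤ Submodule.span k t := by
    rw [← Submodule.span_insert_zero (s := t)]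
    exact Submodule.span_mono hst
  haveI := ht.fintype
  haveI : FiniteDimensional k (Submodule.span k t) := FiniteDimensional.span_of_finite k ht
  calc Module.finrank k (Submodule.span k s) ≤ Module.finrank k (Submodule.span k t) :=
        Submodule.finrank_mono h1
    _ ≤ t.toFinset.card := finrank_span_le_card t
    _ = t.ncard := (Set.ncard_eq_toFinset_card' t).symm


open Filter in
/-- Let A = k⟨x₁,…,x_n⟩/I be a monomial algebra (I generated by the monomials
corresponding to a set W of words).  If there is a word b such that every word with
nonzero image in A is a subword of some bᵐ, then for every N ≥ 1 the number of
words of length N with nonzero image in A is at most the length of b, and A has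
Gelfand–Kirillov dimension at most 1 (computed with the generating subspace spanned
by the images of the generators). -/
theorem monomial_algebra_gk_dim_le_one
    (k : Type) [Field k] (n : ℕ) (W : Set (List (Fin n))) (b : List (Fin n)) :
    let mono : List (Fin n) → FreeAlgebra k (Fin n) :=
      fun w => (w.map (FreeAlgebra.ι k)).prod
    let r : FreeAlgebra k (Fin n) → FreeAlgebra k (Fin n) → Prop :=
      fun a c => ∃ w ∈ W, a = mono w ∧ c = 0
    let π : FreeAlgebra k (Fin n) →ₐ[k] RingQuot r := RingQuot.mkAlgHom k r
    (∀ u : List (Fin n), π (mono u) ≠ 0 →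
        ∃ m : ℕ, u <:+: (List.replicate m b).flatten) →
    (∀ N : ℕ, 1 ≤ N →
        Set.ncard {u : List (Fin n) | u.length = N ∧ π (mono u) ≠ 0} ≤ b.length) ∧
    Filter.limsup
        (fun N : ℕ =>
          Real.log (Module.finrank k
            ↥(Submodule.span k (π '' (mono '' {u : List (Fin n) | u.length ≤ N})))) /
            Real.log N)
        Filter.atTop ≤ 1 := by
  intro mono r π hcov
  set L := b.length with hLdef
  have part1 : ∀ N : ℕ, 1 ≤ N →
      Set.ncard {u : List (Fin n) | u.length = N ∧ π (mono u) ≠ 0} ≤ L := by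
    intro N hN
    exact ncard_factors_le b N hN _ (fun u hu => ⟨hu.1, hcov u hu.2⟩)
  refine ⟨part1, ?_⟩
  -- finiteness of the sets of "nonzero" words of bounded length
  have hfinS : ∀ N : ℕ, {u : List (Fin n) | u.length ≤ N ∧ π (mono u) ≠ 0}.Finite :=
    fun N => (List.finite_length_le (Fin n) N).subset (fun u hu => hu.1)
  have hcardS : ∀ N : ℕ,
      {u : List (Fin n) | u.length ≤ N ∧ π (mono u) ≠ 0}.ncard ≤ 1 + N * L := by
    intro N
    induction N with
    | zero =>
      have hsub : {u : List (Fin n) | u.length ≤ 0 ∧ π (mono u) ≠ 0} ⊆ {([] : List (Fin n))} := by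
        intro u hu
        simpa using List.eq_nil_of_length_eq_zero (Nat.le_zero.mp hu.1)
      simpa using Set.ncard_le_ncard hsub (Set.finite_singleton _)
    | succ N ih =>
      have hsub : {u : List (Fin n) | u.length ≤ N + 1 ∧ π (mono u) ≠ 0} ⊆
          {u : List (Fin n) | u.length ≤ N ∧ π (mono u) ≠ 0} ∪
            {u : List (Fin n) | u.length = N + 1 ∧ π (mono u) ≠ 0} := by
        intro u hu
        obtain ⟨h1, h2⟩ := hu
        rcases Nat.lt_or_ge u.length (N + 1) with h | h
        · exact Or.inl ⟨by omega, h2⟩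
        · exact Or.inr ⟨by omega, h2⟩
      have hfin2 : ({u : List (Fin n) | u.length ≤ N ∧ π (mono u) ≠ 0} ∪
          {u : List (Fin n) | u.length = N + 1 ∧ π (mono u) ≠ 0}).Finite :=
        (hfinS N).union ((List.finite_length_eq (Fin n) (N + 1)).subset (fun u hu => hu.1))
      calc {u : List (Fin n) | u.length ≤ N + 1 ∧ π (mono u) ≠ 0}.ncard
          ≤ _ := Set.ncard_le_ncard hsub hfin2
        _ ≤ _ := Set.ncard_union_le _ _
        _ ≤ (1 + N * L) + L := add_le_add ih (part1 (N + 1) (by omega))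
        _ = 1 + (N + 1) * L := by ring
  -- dimension bound
  have hD : ∀ N : ℕ,
      Module.finrank k
        ↥(Submodule.span k (π '' (mono '' {u : List (Fin n) | u.length ≤ N}))) ≤
        1 + N * L := by
    intro N
    have hsub : π '' (mono '' {u : List (Fin n) | u.length ≤ N}) ⊆
        insert 0 ((fun u => π (mono u)) ''
          {u : List (Fin n) | u.length ≤ N ∧ π (mono u) ≠ 0}) := by
      rintro x ⟨y, ⟨u, hu, rfl⟩, rfl⟩
      by_cases h : π (mono u) = 0
      · exact Set.mem_insert_iff.mpr (Or.inl h)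
      · exact Set.mem_insert_iff.mpr (Or.inr ⟨u, ⟨hu, h⟩, rfl⟩)
    calc Module.finrank k
          ↥(Submodule.span k (π '' (mono '' {u : List (Fin n) | u.length ≤ N})))
        ≤ ((fun u => π (mono u)) ''
            {u : List (Fin n) | u.length ≤ N ∧ π (mono u) ≠ 0}).ncard :=
          finrank_span_le_of_subset_insert_zero hsub ((hfinS N).image _)
      _ ≤ {u : List (Fin n) | u.length ≤ N ∧ π (mono u) ≠ 0}.ncard :=
          Set.ncard_image_le (hfinS N)
      _ ≤ 1 + N * L := hcardS N
  -- conclude via the limsup lemma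
  apply limsup_le_one_aux (Real.log ((L : ℝ) + 1))
  · intro N
    exact div_nonneg (Real.log_natCast_nonneg _) (Real.log_natCast_nonneg _)
  · intro N hN2
    set D := Module.finrank k
      ↥(Submodule.span k (π '' (mono '' {u : List (Fin n) | u.length ≤ N}))) with hDdef
    have hDN : D ≤ N * (L + 1) := by
      have h1 : 1 + N * L ≤ N * (L + 1) := by nlinarith
      exact le_trans (hD N) h1
    have hN0 : (0 : ℝ) < N := by exact_mod_cast Nat.lt_of_lt_of_le (by norm_num) hN2
    have hlogN : 0 < Real.log N := Real.log_pos (by exact_mod_cast hN2)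
    have hlogD : Real.log D ≤ Real.log N + Real.log ((L : ℝ) + 1) := by
      have hmul : Real.log ((N : ℝ) * ((L : ℝ) + 1)) =
          Real.log N + Real.log ((L : ℝ) + 1) :=
        Real.log_mul (by positivity) (by positivity)
      rcases Nat.eq_zero_or_pos D with h | h
      · rw [h]
        push_cast
        rw [Real.log_zero]
        have : (0 : ℝ) ≤ Real.log ((L : ℝ) + 1) := Real.log_nonneg (by norm_num)
        linarith
      · rw [← hmul]
        apply Real.log_le_log (by exact_mod_cast h)
        calc (D : ℝ) ≤ ((N * (L + 1) : ℕ) : ℝ) := by exact_mod_cast hDN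
          _ = (N : ℝ) * ((L : ℝ) + 1) := by push_cast; ring
    calc Real.log D / Real.log N ≤ (Real.log N + Real.log ((L : ℝ) + 1)) / Real.log N := by
          gcongr
      _ = 1 + Real.log ((L : ℝ) + 1) / Real.log N := by
          rw [add_div, div_self hlogN.ne']
end

section
/- Let M be a submonoid of a free monoid Σ* that is free on a single generator b (i.e., M = {b^m : m ≥ 0}). If every word v ∈ Σ* has the property that wvt ∈ M for some words w, t, then every word in Σ* is a subword of b^m for some m, and the number of such words of any fixed positive length n is at most the length of b. -/
private lemma getElem?_flatten_rep {S : Type*} (b : List S) :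
    ∀ (m p : ℕ), p < m * b.length →
      ((List.replicate m b).flatten)[p]? = b[p % b.length]? := by
  intro m
  induction m with
  | zero => intro p hp; simp at hp
  | succ m ih =>
    intro p hp
    rw [List.replicate_succ, List.flatten_cons]
    by_cases hpL : p < b.length
    · rw [List.getElem?_append]
      simp [hpL, Nat.mod_eq_of_lt hpL]
    · push_neg at hpL
      rw [List.getElem?_append_right hpL]
      have hlt : p - b.length < m * b.length := by
        have h1 : (m + 1) * b.length = m * b.length + b.length := by ring
        omega
      rw [ih _ hlt, ← Nat.mod_eq_sub_mod hpL]

/-- Let M = {bᵐ : m ≥ 0} be the submonoid of Σ* freely generated by a single word b.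
If every word v satisfies wvt ∈ M for some words w, t, then every word is a subword
(contiguous factor) of some bᵐ, and for each positive length n there are at most
(length of b) many words of length n. -/
theorem words_subwords_of_power_of_single_generator
    {S : Type*} [Finite S] (b : List S) (M : Set (List S))
    (hM : M = {w : List S | ∃ m : ℕ, w = (List.replicate m b).flatten})
    (h : ∀ v : List S, ∃ w t : List S, w ++ v ++ t ∈ M) :
    (∀ v : List S, ∃ m : ℕ, v <:+: (List.replicate m b).flatten) ∧
    ∀ n : ℕ, 0 < n → Set.ncard {v : List S | v.length = n} ≤ b.length := by
  classical
  subst hM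
  have hinf : ∀ v : List S, ∃ w t m, w ++ v ++ t = (List.replicate m b).flatten := by
    intro v
    obtain ⟨w, t, m, hm⟩ := h v
    exact ⟨w, t, m, hm⟩
  constructor
  · intro v
    obtain ⟨w, t, m, hm⟩ := hinf v
    exact ⟨m, w, t, hm⟩
  · intro n hn
    have hflatlen : ∀ m : ℕ, (List.replicate m b).flatten.length = m * b.length := by
      intro m; simp [List.length_flatten, mul_comm]
    rcases Nat.eq_zero_or_pos b.length with hL | hL
    · -- b is empty, so every word is empty; no words of positive length
      have hempty : {v : List S | v.length = n} = ∅ := by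
        ext v
        simp only [Set.mem_setOf_eq, Set.mem_empty_iff_false, iff_false]
        intro hv
        obtain ⟨w, t, m, hm⟩ := hinf v
        have hlen := congrArg List.length hm
        simp only [List.length_append, hflatlen, hL, Nat.mul_zero] at hlen
        omega
      simp [hempty, hL]
    · set W : ℕ → List S :=
        fun i => (((List.replicate (n + 1) b).flatten).drop i).take n with hW
      have key : ∀ v : List S, v.length = n → ∃ i < b.length, v = W i := by
        intro v hv
        obtain ⟨w, t, m, hm⟩ := hinf v
        refine ⟨w.length % b.length, Nat.mod_lt _ hL, ?_⟩
        have hlen := congrArg List.length hm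
        simp only [List.length_append, hflatlen, hv] at hlen
        apply List.ext_getElem?
        intro k
        by_cases hk : k < n
        · have e1 : v[k]? = ((List.replicate m b).flatten)[w.length + k]? := by
            rw [← hm, List.append_assoc,
              List.getElem?_append_right (Nat.le_add_right _ _),
              Nat.add_sub_cancel_left, List.getElem?_append]
            simp [hv, hk]
          have e2 : (W (w.length % b.length))[k]? =
              ((List.replicate (n + 1) b).flatten)[w.length % b.length + k]? := by
            simp only [hW, List.getElem?_take, hk, if_pos, List.getElem?_drop]
          rw [e1, e2, getElem?_flatten_rep b m _ (by omega),
            getElem?_flatten_rep b (n + 1) _ (by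
              have h1 : w.length % b.length < b.length := Nat.mod_lt _ hL
              have h2 : n * b.length + b.length = (n + 1) * b.length := by ring
              have h3 : n ≤ n * b.length := Nat.le_mul_of_pos_right n hL
              omega)]
          congr 1
          exact (Nat.mod_add_mod _ _ _).symm
        · push_neg at hk
          rw [List.getElem?_eq_none (by omega), List.getElem?_eq_none]
          exact le_trans (List.length_take_le _ _) hk
      have hsub : {v : List S | v.length = n} ⊆ ↑((Finset.range b.length).image W) := by
        intro v hv
        obtain ⟨i, hi, rfl⟩ := key v hv
        simp only [Finset.coe_image, Set.mem_image, Finset.mem_coe, Finset.mem_range]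
        exact ⟨i, hi, rfl⟩
      calc Set.ncard {v : List S | v.length = n}
          ≤ ((Finset.range b.length).image W).card := by
            rw [← Set.ncard_coe_finset]
            exact Set.ncard_le_ncard hsub (Finset.finite_toSet _)
        _ ≤ b.length := Finset.card_image_le.trans (by simp)
end

section
/- Let k be a field and A = k⟨x₁,…,x_n⟩/I a monomial algebra (I generated by words). Suppose B is a subalgebra of A spanned by a set S of (images of) words, E is a set of words containing the empty word with A = Σ_{x∈E} Bx, and every word with nonzero image in A factors uniquely as bx with b ∈ S and x ∈ E. Then for any b₁,…,b_d ∈ B and distinct x₁,…,x_d ∈ E with b₁x₁ + ⋯ + b_d x_d = 0 in A, each bᵢxᵢ = 0; i.e., A is nearly free as a left B-module. -/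
namespace MonomialAlgebraNearlyFree

open Finsupp Classical

variable {k : Type} [Field k] {n : ℕ}

/-- A word is bad if it contains some element of `W` as a factor. -/
def Bad (W : Set (List (Fin n))) (u : List (Fin n)) : Prop :=
  ∃ w ∈ W, ∃ p q, u = p ++ w ++ q

lemma bad_cons {W : Set (List (Fin n))} {u : List (Fin n)} (i : Fin n)
    (h : Bad W u) : Bad W (i :: u) := by
  obtain ⟨w, hw, p, q, rfl⟩ := h
  exact ⟨w, hw, i :: p, q, rfl⟩

/-- The word monomial in the free algebra. -/
noncomputable def mn (u : List (Fin n)) : FreeAlgebra k (Fin n) :=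
  (u.map (FreeAlgebra.ι k)).prod

lemma mn_append (u v : List (Fin n)) : mn (k := k) (u ++ v) = mn u * mn v := by
  simp [mn]

/-- The "normal form" operators: a variable acts on the span of words by
prepending, killing bad words. -/
noncomputable def T (W : Set (List (Fin n))) (i : Fin n) :
    Module.End k (List (Fin n) →₀ k) :=
  Finsupp.lsum k fun u =>
    if Bad W (i :: u) then 0 else Finsupp.lsingle (i :: u)

lemma T_single (W : Set (List (Fin n))) (i : Fin n) (v : List (Fin n)) (a : k) :
    T W i (Finsupp.single v a) =
      if Bad W (i :: v) then 0 else Finsupp.single (i :: v) a := by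
  rw [T, Finsupp.lsum_single]
  split_ifs <;> simp

/-- The representation of the free algebra on the word module. -/
noncomputable def Φ (W : Set (List (Fin n))) :
    FreeAlgebra k (Fin n) →ₐ[k] Module.End k (List (Fin n) →₀ k) :=
  FreeAlgebra.lift k (T W)

lemma Φ_mn (W : Set (List (Fin n))) (u v : List (Fin n)) :
    Φ (k := k) W (mn u) (Finsupp.single v (1 : k)) =
      if Bad W (u ++ v) then (if u = [] then Finsupp.single v 1 else 0)
      else Finsupp.single (u ++ v) 1 := by
  induction u with
  | nil =>
      have h1 : Φ (k := k) W (mn ([] : List (Fin n))) = 1 := by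
        simp [mn, Φ]
      rw [h1, Module.End.one_apply, List.nil_append, if_pos rfl]
      split_ifs <;> rfl
  | cons i u ih =>
      have h1 : mn (k := k) (i :: u) = FreeAlgebra.ι k i * mn u := by
        simp [mn]
      have h2 : Φ (k := k) W (FreeAlgebra.ι k i) = T W i := by
        simp [Φ]
      rw [h1, map_mul, h2, Module.End.mul_apply, ih]
      by_cases hb : Bad W (u ++ v)
      · rw [if_pos hb]
        have hb' : Bad W (i :: (u ++ v)) := bad_cons i hb
        rw [if_pos (show Bad W (i :: u ++ v) from hb'),
          if_neg (List.cons_ne_nil i u)]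
        by_cases hu : u = []
        · subst hu
          rw [if_pos rfl, T_single]
          rw [if_pos (show Bad W (i :: v) from hb')]
        · rw [if_neg hu, map_zero]
      · rw [if_neg hb, T_single]
        rw [if_neg (List.cons_ne_nil i u)]
        rfl

lemma Φ_vanish (W : Set (List (Fin n))) (hnil : ([] : List (Fin n)) ∉ W)
    {w : List (Fin n)} (hw : w ∈ W) : Φ (k := k) W (mn w) = 0 := by
  have hwne : w ≠ [] := fun h => hnil (h ▸ hw)
  apply Finsupp.lhom_ext
  intro a b
  have hb : (Finsupp.single a b : List (Fin n) →₀ k)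
      = b • Finsupp.single a (1 : k) := by
    rw [Finsupp.smul_single, smul_eq_mul, mul_one]
  rw [hb, map_smul, Φ_mn]
  have hbad : Bad W (w ++ a) := ⟨w, hw, [], a, by simp⟩
  rw [if_pos hbad, if_neg hwne]
  simp

end MonomialAlgebraNearlyFree

open MonomialAlgebraNearlyFree in
/-- Let A = k⟨x₁,…,x_n⟩/I be a monomial algebra, B a subalgebra spanned by the
images of a set S of words, and E a set of words containing the empty word such that
A = Σ_{x∈E} B·x and every word with nonzero image in A factors uniquely as b ++ x
with b ∈ S and x ∈ E.  Then any relation b₁x₁ + ⋯ + b_d x_d = 0 with bᵢ ∈ B and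
distinct xᵢ ∈ E forces each bᵢxᵢ = 0; that is, A is nearly free as a left
B-module. -/
theorem monomial_algebra_nearly_free
    (k : Type) [Field k] (n : ℕ) (W : Set (List (Fin n))) :
    let mono : List (Fin n) → FreeAlgebra k (Fin n) :=
      fun w => (w.map (FreeAlgebra.ι k)).prod
    let r : FreeAlgebra k (Fin n) → FreeAlgebra k (Fin n) → Prop :=
      fun a c => ∃ w ∈ W, a = mono w ∧ c = 0
    let π : FreeAlgebra k (Fin n) →ₐ[k] RingQuot r := RingQuot.mkAlgHom k r
    let πw : List (Fin n) → RingQuot r := fun w => π (mono w)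
    ∀ (S E : Set (List (Fin n))) (B : Subalgebra k (RingQuot r)),
      (B : Set (RingQuot r)) = ↑(Submodule.span k (πw '' S)) →
      ([] : List (Fin n)) ∈ E →
      (∀ a : RingQuot r,
        a ∈ Submodule.span k {z : RingQuot r | ∃ b ∈ B, ∃ x ∈ E, z = b * πw x}) →
      (∀ u : List (Fin n), πw u ≠ 0 →
        ∃! p : List (Fin n) × List (Fin n), p.1 ∈ S ∧ p.2 ∈ E ∧ u = p.1 ++ p.2) →
      ∀ (d : ℕ) (bs : Fin d → RingQuot r) (xs : Fin d → List (Fin n)),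
        (∀ i, bs i ∈ B) → (∀ i, xs i ∈ E) → Function.Injective xs →
        ∑ i, bs i * πw (xs i) = 0 → ∀ i, bs i * πw (xs i) = 0 := by
  classical
  intro mono r π πw S E B hB hE hA hUF d bs xs hbs hxs hinj hsum
  by_cases hnil : ([] : List (Fin n)) ∈ W
  · -- the ring is trivial
    have h10 : (1 : RingQuot r) = 0 := by
      have h := RingQuot.mkAlgHom_rel k
        (s := r) (x := mono []) (y := 0) ⟨[], hnil, rfl, rfl⟩
      have hm : mono [] = 1 := by simp [mono]
      rw [hm, map_zero] at h
      simpa using h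
    intro i
    calc bs i * πw (xs i) = (bs i * πw (xs i)) * 1 := (mul_one _).symm
      _ = 0 := by rw [h10, mul_zero]
  · -- main case
    have hmono_mn : ∀ u : List (Fin n), mono u = mn (k := k) u := fun _ => rfl
    have hrel : ∀ ⦃a c : FreeAlgebra k (Fin n)⦄, r a c → Φ W a = Φ W c := by
      rintro a c ⟨w, hw, rfl, rfl⟩
      rw [map_zero, hmono_mn]
      exact Φ_vanish W hnil hw
    set Φb : RingQuot r →ₐ[k] Module.End k (List (Fin n) →₀ k) :=
      RingQuot.liftAlgHom k ⟨Φ W, hrel⟩ with hΦbdef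
    have hΦb : ∀ a, Φb (π a) = Φ W a := fun a =>
      RingQuot.liftAlgHom_mkAlgHom_apply k (Φ W) hrel a
    have hgoodnil : ¬ Bad W ([] : List (Fin n)) := by
      rintro ⟨w, hw, p, q, hpq⟩
      have h0 : p ++ w ++ q = [] := hpq.symm
      rw [List.append_eq_nil_iff, List.append_eq_nil_iff] at h0
      exact hnil (h0.1.2 ▸ hw)
    set F : RingQuot r →ₗ[k] (List (Fin n) →₀ k) :=
      (LinearMap.applyₗ (Finsupp.single ([] : List (Fin n)) (1 : k))).comp
        Φb.toLinearMap with hFdef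
    have hF : ∀ u, F (πw u) =
        if Bad W u then 0 else Finsupp.single u (1 : k) := by
      intro u
      have : F (πw u) = Φb (π (mono u)) (Finsupp.single [] 1) := rfl
      rw [this, hΦb, hmono_mn, Φ_mn]
      rw [List.append_nil]
      split_ifs with h1 h2
      · exact absurd (h2 ▸ h1) hgoodnil
      · rfl
      · rfl
    have hπbad : ∀ u, Bad W u → πw u = 0 := by
      rintro u ⟨w, hw, p, q, rfl⟩
      have hw0 : π (mono w) = 0 := by
        have h := RingQuot.mkAlgHom_rel k
          (s := r) (x := mono w) (y := 0) ⟨w, hw, rfl, rfl⟩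
        rw [map_zero] at h
        exact h
      have hm : mono (p ++ w ++ q) = mono p * mono w * mono q := by
        rw [hmono_mn, hmono_mn, hmono_mn, hmono_mn, mn_append, mn_append]
      show π (mono (p ++ w ++ q)) = 0
      rw [hm, map_mul, map_mul, hw0, mul_zero, zero_mul]
    have hπap : ∀ a b : List (Fin n), πw (a ++ b) = πw a * πw b := by
      intro a b
      show π (mono (a ++ b)) = π (mono a) * π (mono b)
      have hm : mono (a ++ b) = mono a * mono b := by
        rw [hmono_mn, hmono_mn, hmono_mn, mn_append]
      rw [hm, map_mul]
    set G : (List (Fin n) →₀ k) →ₗ[k] RingQuot r :=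
      Finsupp.linearCombination k πw with hGdef
    have hGF : ∀ u, G (F (πw u)) = πw u := by
      intro u
      rw [hF]
      by_cases hb : Bad W u
      · rw [if_pos hb, map_zero, hπbad u hb]
      · rw [if_neg hb, hGdef]
        rw [Finsupp.linearCombination_single, one_smul]
    -- decompose the bs
    have hmem : ∀ i, bs i ∈ Submodule.span k (πw '' S) := by
      intro i
      have h := hbs i
      rw [← SetLike.mem_coe, hB] at h
      exact h
    choose m c g hg using fun i => Submodule.mem_span_set'.mp (hmem i)
    choose s hsS hsπ using fun i (j : Fin (m i)) =>
      (Set.mem_image _ _ _).mp (g i j).2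
    have hRi : ∀ i, bs i * πw (xs i) = ∑ j, c i j • πw (s i j ++ xs i) := by
      intro i
      calc bs i * πw (xs i)
          = (∑ j, c i j • (g i j : RingQuot r)) * πw (xs i) := by rw [hg i]
        _ = ∑ j, c i j • ((g i j : RingQuot r) * πw (xs i)) := by
            rw [Finset.sum_mul]
            exact Finset.sum_congr rfl fun j _ => smul_mul_assoc _ _ _
        _ = ∑ j, c i j • πw (s i j ++ xs i) := by
            refine Finset.sum_congr rfl fun j _ => ?_
            rw [hπap, hsπ]
    have hFRi : ∀ i, F (bs i * πw (xs i)) =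
        ∑ j, c i j • (if Bad W (s i j ++ xs i) then 0
          else Finsupp.single (s i j ++ xs i) (1 : k)) := by
      intro i
      rw [hRi, map_sum]
      exact Finset.sum_congr rfl fun j _ => by rw [map_smul, hF]
    have hsupp : ∀ i u, u ∈ (F (bs i * πw (xs i))).support →
        ∃ t ∈ S, ¬ Bad W u ∧ u = t ++ xs i := by
      intro i u hu
      rw [hFRi] at hu
      have h0 : (∑ j, c i j • (if Bad W (s i j ++ xs i) then 0
          else Finsupp.single (s i j ++ xs i) (1 : k))) u ≠ 0 :=
        Finsupp.mem_support_iff.mp hu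
      rw [Finsupp.finset_sum_apply] at h0
      obtain ⟨j, _, hne⟩ := Finset.exists_ne_zero_of_sum_ne_zero h0
      by_cases hb : Bad W (s i j ++ xs i)
      · rw [if_pos hb] at hne
        simp at hne
      · rw [if_neg hb] at hne
        have hueq : u = s i j ++ xs i := by
          by_contra hne2
          rw [Finsupp.smul_apply, Finsupp.single_apply,
            if_neg (fun h => hne2 h.symm)] at hne
          simp at hne
        exact ⟨s i j, hsS i j, hueq ▸ hb, hueq⟩
    have hFzero : ∀ i, F (bs i * πw (xs i)) = 0 := by
      have hsum0 : ∑ i, F (bs i * πw (xs i)) = 0 := by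
        rw [← map_sum, hsum, map_zero]
      intro i
      by_contra hne
      obtain ⟨u, hu⟩ := Finsupp.support_nonempty_iff.mpr hne
      have hu' : ∀ j, j ≠ i → (F (bs j * πw (xs j))) u = 0 := by
        intro j hj
        by_contra h0
        have huj : u ∈ (F (bs j * πw (xs j))).support :=
          Finsupp.mem_support_iff.mpr h0
        obtain ⟨t, htS, hgood, hut⟩ := hsupp j u huj
        obtain ⟨t', ht'S, _, hut'⟩ := hsupp i u hu
        have hπu : πw u ≠ 0 := by
          intro h
          have h2 := hF u
          rw [h, map_zero, if_neg hgood] at h2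
          exact one_ne_zero (Finsupp.single_eq_zero.mp h2.symm)
        obtain ⟨p, _, hup⟩ := hUF u hπu
        have e1 := hup (t, xs j) ⟨htS, hxs j, hut⟩
        have e2 := hup (t', xs i) ⟨ht'S, hxs i, hut'⟩
        have hxe : xs j = xs i := congrArg Prod.snd (e1.trans e2.symm)
        exact hj (hinj hxe)
      have heval : (∑ j, F (bs j * πw (xs j))) u = (F (bs i * πw (xs i))) u := by
        rw [Finsupp.finset_sum_apply]
        exact Finset.sum_eq_single i (fun j _ hj => hu' j hj) (by simp)
      rw [hsum0] at heval
      exact Finsupp.mem_support_iff.mp hu heval.symm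
    intro i
    have hGFi : G (F (bs i * πw (xs i))) = bs i * πw (xs i) := by
      conv_lhs => rw [hRi]
      rw [map_sum, map_sum]
      conv_rhs => rw [hRi]
      refine Finset.sum_congr rfl fun j _ => ?_
      rw [map_smul, map_smul, hGF]
    rw [hFzero i, map_zero] at hGFi
    exact hGFi.symm
end
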